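/- arXiv:math/9801026 — 9 statements merged into one kernel-verified Lean document; each statement's English description precedes it below -/
import Mathlib

section
/- If f : ℝ → ℝ is smooth (C^∞), nonnegative, and at every point its Taylor series is not identically zero (i.e. f is nowhere flat of infinite order), then there exists a smooth function x : ℝ → ℝ with x(t)^2 = f(t) for all t. -/
open MeasureTheory intervalIntegral Metric

lemma hadamard {f : ℝ → ℝ} (hf : ContDiff ℝ (⊤ : ℕ∞) f) (z : ℝ) :
    ∃ g : ℝ → ℝ, ContDiff ℝ (⊤ : ℕ∞) g ∧ ∀ t, f t = f z + (t - z) * g t := by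
  classical
  set G : ℕ → ℝ → ℝ := fun m t => ∫ s in (0:ℝ)..1, s ^ m * iteratedDeriv (m+1) f (z + s * (t - z)) with hG
  have hcont : ∀ m : ℕ, Continuous (iteratedDeriv m f) := fun m =>
    hf.continuous_iteratedDeriv m (by exact_mod_cast le_top)
  have hdiffit : ∀ (m : ℕ) (u : ℝ), HasDerivAt (iteratedDeriv m f) (iteratedDeriv (m+1) f u) u := by
    intro m u
    have : Differentiable ℝ (iteratedDeriv m f) :=
      hf.differentiable_iteratedDeriv m (by exact_mod_cast lt_top_iff_ne_top.2 (by simp))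
    simpa [iteratedDeriv_succ] using (this u).hasDerivAt
  -- integrand continuity in s, for fixed t
  have hFcont : ∀ (m : ℕ) (t : ℝ), Continuous (fun s : ℝ => s ^ m * iteratedDeriv (m+1) f (z + s * (t - z))) := by
    intro m t
    exact (continuous_pow m).mul ((hcont (m+1)).comp (by continuity))
  have key : ∀ (m : ℕ) (t₀ : ℝ), HasDerivAt (G m) (G (m+1) t₀) t₀ := by
    intro m t₀
    set φ := iteratedDeriv (m+1) f
    set φ' := iteratedDeriv (m+2) f
    obtain ⟨C, hC⟩ : ∃ C, ∀ u ∈ Set.Icc (z - (|t₀ - z| + 1)) (z + (|t₀ - z| + 1)), ‖φ' u‖ ≤ C :=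
      (isCompact_Icc).exists_bound_of_continuousOn (hcont (m+2)).continuousOn
    have hmem : ∀ (s : ℝ), s ∈ Set.uIoc (0:ℝ) 1 → ∀ x ∈ ball t₀ 1,
        z + s * (x - z) ∈ Set.Icc (z - (|t₀ - z| + 1)) (z + (|t₀ - z| + 1)) := by
      intro s hs x hx
      rw [Set.uIoc_of_le (by norm_num)] at hs
      have hs0 : 0 ≤ s := le_of_lt hs.1
      have hs1 : s ≤ 1 := hs.2
      have hxz : |x - z| ≤ |t₀ - z| + 1 := by
        have := mem_ball_iff_norm.1 hx
        calc |x - z| = |(x - t₀) + (t₀ - z)| := by ring_nf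
        _ ≤ |x - t₀| + |t₀ - z| := abs_add_le _ _
        _ ≤ |t₀ - z| + 1 := by
            have : |x - t₀| ≤ 1 := le_of_lt (by simpa [Real.norm_eq_abs] using this)
            linarith
      have : |s * (x - z)| ≤ |t₀ - z| + 1 := by
        rw [abs_mul]
        calc |s| * |x - z| ≤ 1 * (|t₀ - z| + 1) := by
              apply mul_le_mul (by rwa [abs_of_nonneg hs0]) hxz (abs_nonneg _) zero_le_one
        _ = |t₀ - z| + 1 := one_mul _
      constructor <;> [linarith [neg_abs_le (s * (x - z))]; linarith [le_abs_self (s * (x - z))]]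
    have main := hasDerivAt_integral_of_dominated_loc_of_deriv_le
      (F := fun x s => s ^ m * φ (z + s * (x - z)))
      (F' := fun x s => s ^ m * (φ' (z + s * (x - z)) * s))
      (x₀ := t₀) (s := ball t₀ 1) (a := 0) (b := 1) (μ := volume)
      (bound := fun _ => C) (ball_mem_nhds t₀ one_pos)
      (Filter.Eventually.of_forall (fun x => (hFcont m x).aestronglyMeasurable))
      ((hFcont m t₀).intervalIntegrable _ _)
      (Continuous.aestronglyMeasurable (by
        exact ((continuous_pow m).mul (((hcont (m+2)).comp (by continuity)).mul continuous_id))))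
      (Filter.Eventually.of_forall (fun s hs x hx => by
        have hsmem := hmem s hs x hx
        have hs' : s ∈ Set.uIoc (0:ℝ) 1 := hs
        rw [Set.uIoc_of_le (by norm_num : (0:ℝ) ≤ 1)] at hs'
        have hs0 : 0 ≤ s := le_of_lt hs'.1
        have hs1 : s ≤ 1 := hs'.2
        have h1 : |s ^ m| ≤ 1 := by
          rw [abs_of_nonneg (pow_nonneg hs0 m)]
          exact pow_le_one₀ hs0 hs1
        have h2 : ‖φ' (z + s * (x - z))‖ ≤ C := hC _ hsmem
        have hC0 : 0 ≤ C := le_trans (norm_nonneg _) h2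
        calc ‖s ^ m * (φ' (z + s * (x - z)) * s)‖
            = |s ^ m| * (‖φ' (z + s * (x - z))‖ * |s|) := by
              simp [Real.norm_eq_abs, abs_mul]
        _ ≤ 1 * (C * 1) := by
            apply mul_le_mul h1 _ (by positivity) zero_le_one
            exact mul_le_mul h2 (by rwa [abs_of_nonneg hs0]) (abs_nonneg _) hC0
        _ = C := by ring))
      (intervalIntegrable_const)
      (Filter.Eventually.of_forall (fun s _ x _ => by
        have hinner : HasDerivAt (fun x : ℝ => z + s * (x - z)) s x := by
          simpa using (((hasDerivAt_id x).sub_const z).const_mul s).const_add z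
        exact ((hdiffit (m+1) (z + s * (x - z))).comp x hinner).const_mul (s ^ m)))
    have heq : (∫ s in (0:ℝ)..1, s ^ m * (φ' (z + s * (t₀ - z)) * s)) = G (m+1) t₀ := by
      apply intervalIntegral.integral_congr
      intro s _
      simp only [hG]
      rw [pow_succ]
      ring
    rw [heq] at main
    exact main.2
  have derivG : ∀ m : ℕ, deriv (G m) = G (m+1) := fun m => funext fun t => (key m t).deriv
  have itG : ∀ m : ℕ, iteratedDeriv m (G 0) = G m := by
    intro m
    induction m with
    | zero => rfl
    | succ k ih => rw [iteratedDeriv_succ, ih, derivG]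
  have hGsmooth : ContDiff ℝ (⊤ : ℕ∞) (G 0) := by
    apply contDiff_of_differentiable_iteratedDeriv
    intro m _
    rw [itG]
    exact fun t => (key m t).differentiableAt
  refine ⟨G 0, hGsmooth, fun t => ?_⟩
  -- FTC
  have hcomp : ∀ s : ℝ, HasDerivAt (fun s : ℝ => f (z + s * (t - z)))
      (iteratedDeriv 1 f (z + s * (t - z)) * (t - z)) s := by
    intro s
    have hinner : HasDerivAt (fun s : ℝ => z + s * (t - z)) (t - z) s := by
      simpa using ((hasDerivAt_id s).mul_const (t - z)).const_add z
    simpa [iteratedDeriv_one, Function.comp_def] using ((hdiffit 0 (z + s * (t - z))).comp s hinner)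
  have hFTC := intervalIntegral.integral_eq_sub_of_hasDerivAt
    (f := fun s : ℝ => f (z + s * (t - z)))
    (f' := fun s : ℝ => iteratedDeriv 1 f (z + s * (t - z)) * (t - z))
    (a := 0) (b := 1)
    (fun s _ => hcomp s)
    ((((hcont 1).comp (by continuity)).mul continuous_const).intervalIntegrable _ _)
  simp only [one_mul, mul_zero, add_zero, mul_one, zero_mul] at hFTC
  have : (∫ s in (0:ℝ)..1, iteratedDeriv 1 f (z + s * (t - z)) * (t - z))
      = G 0 t * (t - z) := by
    rw [intervalIntegral.integral_mul_const]
    simp [hG]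
  rw [this] at hFTC
  have : z + (t - z) = t := by ring
  rw [this] at hFTC
  linear_combination -hFTC

lemma lemA (z : ℝ) : ∀ (j : ℕ) (h : ℝ → ℝ), ContDiff ℝ (⊤ : ℕ∞) h →
    iteratedDeriv j (fun t => (t - z) ^ j * h t) z = (j.factorial : ℝ) * h z := by
  intro j
  induction j with
  | zero => intro h _; simp
  | succ j ih =>
    intro h hh
    have hderiv : deriv (fun t => (t - z) ^ (j+1) * h t)
        = fun t => (t - z) ^ j * (((j:ℝ)+1) * h t + (t - z) * deriv h t) := by
      funext t
      have h1 : HasDerivAt (fun t : ℝ => (t - z) ^ (j+1)) (((j:ℝ)+1) * (t - z) ^ j) t := by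
        simpa using (((hasDerivAt_id t).sub_const z).fun_pow (j+1))
      have h2 : HasDerivAt h (deriv h t) t :=
        (hh.differentiable (by simp) t).hasDerivAt
      have := h1.fun_mul h2
      rw [this.deriv]
      ring
    rw [iteratedDeriv_succ', hderiv,
      ih _ (by
        have hdh : ContDiff ℝ (⊤ : ℕ∞) (deriv h) := (contDiff_infty_iff_deriv.mp (by exact_mod_cast hh)).2
        exact ((contDiff_const.mul hh).add ((contDiff_id.sub contDiff_const).mul hdh)))]
    simp [Nat.factorial_succ]
    ring

/-- positivity neighborhood helper -/
lemma pos_nbhd {g : ℝ → ℝ} (hg : Continuous g) {t₀ : ℝ} (h : 0 < g t₀) :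
    ∃ ε > 0, ∀ t, |t - t₀| ≤ ε → 0 < g t := by
  have hev : ∀ᶠ t in nhds t₀, 0 < g t := (hg.tendsto t₀).eventually (eventually_gt_nhds h)
  rw [Metric.eventually_nhds_iff] at hev
  obtain ⟨ε, hε, hball⟩ := hev
  exact ⟨ε/2, by linarith, fun t ht => hball (by rw [Real.dist_eq]; linarith)⟩

lemma local_structure {f : ℝ → ℝ} (hf : ContDiff ℝ (⊤ : ℕ∞) f)
    (hpos : ∀ t, 0 ≤ f t) {z : ℝ} (h0 : f z = 0)
    (hfl : ∃ n : ℕ, iteratedDeriv n f z ≠ 0) :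
    ∃ (k : ℕ) (g : ℝ → ℝ), 0 < k ∧ ContDiff ℝ (⊤ : ℕ∞) g ∧ 0 < g z ∧
      ∀ t, f t = (t - z) ^ (2 * k) * g t := by
  classical
  set n := Nat.find hfl with hn
  have hnne : iteratedDeriv n f z ≠ 0 := Nat.find_spec hfl
  have hmin : ∀ j < n, iteratedDeriv j f z = 0 := fun j hj => by
    by_contra h; exact Nat.find_min hfl hj h
  have hn1 : 1 ≤ n := by
    rcases Nat.eq_zero_or_pos n with h | h
    · exfalso; apply hnne; rw [h]; simpa [iteratedDeriv_zero] using h0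
    · exact h
  -- iterated Hadamard factorization
  have factor : ∀ j ≤ n, ∃ g : ℝ → ℝ, ContDiff ℝ (⊤ : ℕ∞) g ∧ ∀ t, f t = (t - z) ^ j * g t := by
    intro j
    induction j with
    | zero => intro _; exact ⟨f, hf, fun t => by simp⟩
    | succ j ih =>
      intro hj
      obtain ⟨g, hg, hfac⟩ := ih (le_trans (Nat.le_succ j) hj)
      have hgz : g z = 0 := by
        have h1 : iteratedDeriv j f z = (j.factorial : ℝ) * g z := by
          rw [show f = (fun t => (t - z) ^ j * g t) from funext hfac]
          exact lemA z j g hg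
        have h2 : iteratedDeriv j f z = 0 := hmin j (by omega)
        rw [h2] at h1
        have hne : (j.factorial : ℝ) ≠ 0 := by positivity
        rcases mul_eq_zero.mp h1.symm with h | h
        · exact absurd h hne
        · exact h
      obtain ⟨g', hg', hfac'⟩ := hadamard hg z
      refine ⟨g', hg', fun t => ?_⟩
      rw [hfac t, hfac' t, hgz]
      ring
  obtain ⟨g, hg, hfac⟩ := factor n le_rfl
  have hgz : g z ≠ 0 := by
    intro h
    apply hnne
    have h1 : iteratedDeriv n f z = (n.factorial : ℝ) * g z := by
      rw [show f = (fun t => (t - z) ^ n * g t) from funext hfac]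
      exact lemA z n g hg
    rw [h1, h, mul_zero]
  -- g z > 0
  have hgzpos : 0 < g z := by
    rcases lt_or_gt_of_ne hgz with h | h
    · exfalso
      obtain ⟨ε, hε, hball⟩ := pos_nbhd (g := fun t => -g t) (hg.continuous.neg) (t₀ := z)
        (by show 0 < -g z; linarith)
      have ht : g (z + ε) < 0 := by
        have h5 := hball (z + ε) (by rw [abs_of_nonneg] <;> linarith)
        change 0 < -g (z + ε) at h5
        linarith
      have := hpos (z + ε)
      rw [hfac (z + ε)] at this
      nlinarith [pow_pos (show (0:ℝ) < z + ε - z by linarith) n]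
    · exact h
  clear_value n
  -- n even
  have hneven : Even n := by
    by_contra hodd
    rw [Nat.not_even_iff_odd] at hodd
    obtain ⟨ε, hε, hball⟩ := pos_nbhd (hg.continuous) hgzpos
    have hgt : 0 < g (z - ε) := hball (z - ε) (by rw [show z - ε - z = -ε by ring, abs_neg, abs_of_nonneg] <;> linarith)
    have := hpos (z - ε)
    rw [hfac (z - ε)] at this
    have hneg : (z - ε - z) ^ n < 0 := by
      rw [show z - ε - z = -ε by ring]
      exact Odd.pow_neg hodd (by linarith)
    nlinarith
  obtain ⟨k, hk⟩ := hneven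
  refine ⟨k, g, by omega, hg, hgzpos, fun t => by rw [show 2*k = n by omega, hfac t]⟩


/-- If `f : ℝ → ℝ` is smooth, nonnegative, and nowhere flat of infinite order
(at every point some derivative is nonzero), then there is a smooth global
square root `x` with `x t ^ 2 = f t` for all `t`. -/
theorem smooth_sqrt_of_nowhere_flat (f : ℝ → ℝ)
    (hf : ContDiff ℝ (⊤ : ℕ∞) f)
    (hpos : ∀ t, 0 ≤ f t)
    (hflat : ∀ t₀ : ℝ, ∃ n : ℕ, iteratedDeriv n f t₀ ≠ 0) :
    ∃ x : ℝ → ℝ, ContDiff ℝ (⊤ : ℕ∞) x ∧ ∀ t, x t ^ 2 = f t := by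
  classical
  have hloc := fun (z : ℝ) (h0 : f z = 0) => local_structure hf hpos h0 (hflat z)
  choose k g hkpos hgsm hgz hfacp using hloc
  -- basepoint where f is nonzero
  obtain ⟨b, hb⟩ : ∃ b, f b ≠ 0 := by
    by_contra h
    push_neg at h
    obtain ⟨n, hn⟩ := hflat 0
    apply hn
    have hzero : ∀ m : ℕ, iteratedDeriv m f = fun _ => 0 := by
      intro m
      induction m with
      | zero => exact funext fun t => by simpa [iteratedDeriv_zero] using h t
      | succ m ih => rw [iteratedDeriv_succ, ih]; funext t; simp
    rw [hzero n]
  set O : Set ℝ := {z | ∃ h0 : f z = 0, Odd (k z h0)} with hO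
  have hOZ : ∀ s ∈ O, f s = 0 := fun s hs => hs.1
  have hbO : b ∉ O := fun hs => hb (hOZ b hs)
  -- isolation of zeros
  have isol : ∀ z : ℝ, ∃ ε > 0, ∀ t, |t - z| ≤ ε → t ≠ z → 0 < f t := by
    intro z
    by_cases h0 : f z = 0
    · obtain ⟨ε, hε, hball⟩ := pos_nbhd (hgsm z h0).continuous (hgz z h0)
      refine ⟨ε, hε, fun t ht htz => ?_⟩
      rw [hfacp z h0 t]
      have h2 : 0 < (t - z) ^ (2 * k z h0) := by
        rw [pow_mul]
        exact pow_pos (pow_two_pos_of_ne_zero (sub_ne_zero.mpr htz)) _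
      exact mul_pos h2 (hball t ht)
    · obtain ⟨ε, hε, hball⟩ := pos_nbhd hf.continuous (lt_of_le_of_ne (hpos z) (Ne.symm h0))
      exact ⟨ε, hε, fun t ht _ => hball t ht⟩
  -- hygiene: no other points of O nearby
  have hyg : ∀ z : ℝ, ∃ ε > 0, ∀ s ∈ O, s ≠ z → ¬(|s - z| ≤ ε) := by
    intro z
    obtain ⟨ε, hε, hiso⟩ := isol z
    exact ⟨ε, hε, fun s hs hsz habs => (hiso s habs hsz).ne' (hOZ s hs)⟩
  -- finiteness of O on compact intervals
  have hOfin : ∀ A B : ℝ, (O ∩ Set.Icc A B).Finite := by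
    intro A B
    by_contra hinf
    have hinf' : (O ∩ Set.Icc A B).Infinite := hinf
    obtain ⟨x, _, hacc⟩ := hinf'.exists_accPt_of_subset_isCompact isCompact_Icc
      Set.inter_subset_right
    obtain ⟨ε, hε, hiso⟩ := isol x
    rw [accPt_iff_nhds] at hacc
    obtain ⟨y, ⟨hy1, hy2⟩, hyx⟩ := hacc (Metric.closedBall x ε) (Metric.closedBall_mem_nhds x hε)
    have : 0 < f y := hiso y (by simpa [Real.dist_eq] using Metric.mem_closedBall.mp hy1) hyx
    exact this.ne' (hOZ y hy2.1)
  -- the sign-counting set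
  set D : ℝ → Set ℝ := fun t => {s | s ∈ O ∧ ((b < s ∧ s ≤ t) ∨ (t < s ∧ s ≤ b))} with hD
  have hDfin : ∀ t, (D t).Finite := by
    intro t
    apply (hOfin (min b t) (max b t)).subset
    rintro s ⟨hsO, ⟨h1, h2⟩ | ⟨h1, h2⟩⟩
    · exact ⟨hsO, le_trans (min_le_left _ _) h1.le, le_trans h2 (le_max_right _ _)⟩
    · exact ⟨hsO, le_trans (min_le_right _ _) h1.le, le_trans h2 (le_max_left _ _)⟩
  set σ : ℝ → ℝ := fun t => (-1 : ℝ) ^ ((D t).ncard) with hσdef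
  have hσsq : ∀ t, σ t ^ 2 = 1 := by
    intro t
    rw [hσdef]
    rw [← pow_mul, mul_comm, pow_mul]
    norm_num
  -- local behaviour of D
  have hDshift : ∀ z ε, (∀ s ∈ O, s ≠ z → ¬(|s - z| ≤ ε)) →
      ∀ t, |t - z| ≤ ε → D t \ {z} = D z \ {z} := by
    intro z ε hhyg t ht
    obtain ⟨ht1, ht2⟩ := abs_le.mp ht
    ext s
    simp only [hD, Set.mem_diff, Set.mem_setOf_eq, Set.mem_singleton_iff]
    constructor
    · rintro ⟨⟨hsO, hcase⟩, hsz⟩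
      have hfar := hhyg s hsO hsz
      rw [not_le] at hfar
      rcases lt_abs.mp hfar with h3 | h3 <;>
        rcases hcase with ⟨h1, h2⟩ | ⟨h1, h2⟩ <;>
        refine ⟨⟨hsO, ?_⟩, hsz⟩ <;>
        first
          | (left; exact ⟨by linarith, by linarith⟩)
          | (right; exact ⟨by linarith, by linarith⟩)
    · rintro ⟨⟨hsO, hcase⟩, hsz⟩
      have hfar := hhyg s hsO hsz
      rw [not_le] at hfar
      rcases lt_abs.mp hfar with h3 | h3 <;>
        rcases hcase with ⟨h1, h2⟩ | ⟨h1, h2⟩ <;>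
        refine ⟨⟨hsO, ?_⟩, hsz⟩ <;>
        first
          | (left; exact ⟨by linarith, by linarith⟩)
          | (right; exact ⟨by linarith, by linarith⟩)
  -- σ locally constant away from O
  have hconst : ∀ z ε, z ∉ O → (∀ s ∈ O, s ≠ z → ¬(|s - z| ≤ ε)) →
      ∀ t, |t - z| ≤ ε → σ t = σ z := by
    intro z ε hzO hhyg t ht
    have hzDt : ∀ u, z ∉ D u := fun u hu => hzO hu.1
    have h1 : D t = D t \ {z} := (Set.diff_singleton_eq_self (hzDt t)).symm
    have h2 : D z = D z \ {z} := (Set.diff_singleton_eq_self (hzDt z)).symm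
    rw [hσdef]
    simp only
    rw [h1, h2, hDshift z ε hhyg t ht]
  -- σ flips across points of O
  have hflip : ∀ z ε, z ∈ O → (∀ s ∈ O, s ≠ z → ¬(|s - z| ≤ ε)) →
      ∃ c : ℝ, ∀ t, |t - z| ≤ ε → (t < z → σ t = c) ∧ (z < t → σ t = -c) := by
    intro z ε hzO hhyg
    have hzb : z ≠ b := fun h => hbO (h ▸ hzO)
    set E := D z \ {z} with hE
    have hEfin : E.Finite := Set.Finite.diff (hDfin z)
    have hzE : z ∉ E := fun h => h.2 rfl
    have hsplit : ∀ t, |t - z| ≤ ε → D t \ {z} = E := fun t ht => hDshift z ε hhyg t ht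
    have hcardmem : ∀ t, |t - z| ≤ ε → z ∈ D t → σ t = -((-1 : ℝ) ^ E.ncard) := by
      intro t ht hzDt
      have : D t = insert z E := by
        rw [← hsplit t ht, Set.insert_diff_singleton, Set.insert_eq_self.mpr hzDt]
      rw [hσdef]
      simp only
      rw [this, Set.ncard_insert_of_notMem hzE hEfin, pow_succ]
      ring
    have hcardnot : ∀ t, |t - z| ≤ ε → z ∉ D t → σ t = (-1 : ℝ) ^ E.ncard := by
      intro t ht hzDt
      have : D t = E := by rw [← hsplit t ht, Set.diff_singleton_eq_self hzDt]
      rw [hσdef]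
      simp only
      rw [this]
    have hmemiff : ∀ t, z ∈ D t ↔ (b < z ∧ z ≤ t) ∨ (t < z ∧ z ≤ b) := by
      intro t
      simp only [hD, Set.mem_setOf_eq]
      exact ⟨fun h => h.2, fun h => ⟨hzO, h⟩⟩
    rcases lt_or_gt_of_ne hzb with hlt | hgt
    · -- z < b : z ∈ D t ↔ t < z
      refine ⟨-((-1 : ℝ) ^ E.ncard), fun t ht => ⟨fun htz => ?_, fun htz => ?_⟩⟩
      · exact hcardmem t ht ((hmemiff t).mpr (Or.inr ⟨htz, hlt.le⟩))
      · rw [neg_neg]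
        refine hcardnot t ht (fun hmem => ?_)
        rcases (hmemiff t).mp hmem with ⟨h1, _⟩ | ⟨h1, _⟩ <;> linarith
    · -- b < z : z ∈ D t ↔ z ≤ t
      refine ⟨(-1 : ℝ) ^ E.ncard, fun t ht => ⟨fun htz => ?_, fun htz => ?_⟩⟩
      · refine hcardnot t ht (fun hmem => ?_)
        rcases (hmemiff t).mp hmem with ⟨_, h2⟩ | ⟨_, h2⟩ <;> linarith
      · exact hcardmem t ht ((hmemiff t).mpr (Or.inl ⟨hgt, htz.le⟩))
  -- the candidate square root
  refine ⟨fun t => σ t * Real.sqrt (f t), ?_, fun t => by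
    rw [mul_pow, hσsq t, one_mul, Real.sq_sqrt (hpos t)]⟩
  rw [contDiff_iff_contDiffAt]
  intro t₀
  by_cases h0 : f t₀ = 0
  · -- zero point : factorization
    set k₀ := k t₀ h0 with hk₀
    set g₀ := g t₀ h0 with hg₀
    obtain ⟨ε₁, hε₁, hball₁⟩ := pos_nbhd (hgsm t₀ h0).continuous (hgz t₀ h0)
    obtain ⟨ε₂, hε₂, hhyg₂⟩ := hyg t₀
    set ε := min ε₁ ε₂ with hε
    have hεpos : 0 < ε := lt_min hε₁ hε₂
    have hhyg : ∀ s ∈ O, s ≠ t₀ → ¬(|s - t₀| ≤ ε) :=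
      fun s hs hst habs => hhyg₂ s hs hst (le_trans habs (min_le_right _ _))
    have hsqrt : ∀ t, |t - t₀| ≤ ε → Real.sqrt (f t) = |(t - t₀) ^ k₀| * Real.sqrt (g₀ t) := by
      intro t ht
      rw [hfacp t₀ h0 t, pow_mul,
        show ((t - t₀) ^ 2) ^ (k t₀ h0) = ((t - t₀) ^ k₀) ^ 2 by
          rw [← pow_mul, ← pow_mul, mul_comm],
        Real.sqrt_mul (sq_nonneg ((t - t₀) ^ k₀)) (g t₀ h0 t), Real.sqrt_sq_eq_abs]
    by_cases hkodd : Odd k₀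
    · -- odd case: sign flips
      have ht₀O : t₀ ∈ O := ⟨h0, hkodd⟩
      obtain ⟨c, hc⟩ := hflip t₀ ε ht₀O hhyg
      have hcd : ContDiffAt ℝ (⊤ : ℕ∞) (fun t => -c * ((t - t₀) ^ k₀ * Real.sqrt (g₀ t))) t₀ := by
        apply ContDiffAt.mul contDiffAt_const
        apply ContDiffAt.mul ((contDiff_id.sub contDiff_const).pow k₀).contDiffAt
        exact (Real.contDiffAt_sqrt (hgz t₀ h0).ne').comp t₀ (hgsm t₀ h0).contDiffAt
      apply hcd.congr_of_eventuallyEq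
      rw [Filter.eventuallyEq_iff_exists_mem]
      refine ⟨Metric.closedBall t₀ ε, Metric.closedBall_mem_nhds t₀ hεpos, fun t ht' => ?_⟩
      have ht : |t - t₀| ≤ ε := by simpa [Real.dist_eq] using ht'
      show σ t * Real.sqrt (f t) = -c * ((t - t₀) ^ k₀ * Real.sqrt (g₀ t))
      rcases lt_trichotomy t t₀ with hlt | heq | hgt
      · have hneg : (t - t₀) ^ k₀ < 0 := Odd.pow_neg hkodd (sub_neg.mpr hlt)
        rw [(hc t ht).1 hlt, hsqrt t ht, abs_of_neg hneg]
        ring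
      · subst heq
        rw [h0, Real.sqrt_zero, sub_self, zero_pow (hkpos t h0).ne']
        ring
      · have hpos' : 0 < (t - t₀) ^ k₀ := pow_pos (sub_pos.mpr hgt) _
        rw [(hc t ht).2 hgt, hsqrt t ht, abs_of_pos hpos']
    · -- even case: σ locally constant
      have ht₀O : t₀ ∉ O := by
        rintro ⟨h0', hodd⟩
        rw [Subsingleton.elim h0' h0] at hodd
        exact hkodd hodd
      have hcd : ContDiffAt ℝ (⊤ : ℕ∞) (fun t => σ t₀ * ((t - t₀) ^ k₀ * Real.sqrt (g₀ t))) t₀ := by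
        apply ContDiffAt.mul contDiffAt_const
        apply ContDiffAt.mul ((contDiff_id.sub contDiff_const).pow k₀).contDiffAt
        exact (Real.contDiffAt_sqrt (hgz t₀ h0).ne').comp t₀ (hgsm t₀ h0).contDiffAt
      apply hcd.congr_of_eventuallyEq
      have hkeven : Even k₀ := Nat.not_odd_iff_even.mp hkodd
      have hsc := hconst t₀ ε ht₀O hhyg
      rw [Filter.eventuallyEq_iff_exists_mem]
      refine ⟨Metric.closedBall t₀ ε, Metric.closedBall_mem_nhds t₀ hεpos, fun t ht' => ?_⟩
      have ht : |t - t₀| ≤ ε := by simpa [Real.dist_eq] using ht'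
      show σ t * Real.sqrt (f t) = σ t₀ * ((t - t₀) ^ k₀ * Real.sqrt (g₀ t))
      rw [hsc t ht, hsqrt t ht, abs_of_nonneg (hkeven.pow_nonneg _)]
  · -- nonzero point
    have hfpos : 0 < f t₀ := lt_of_le_of_ne (hpos t₀) (Ne.symm h0)
    obtain ⟨ε₁, hε₁, hball₁⟩ := pos_nbhd hf.continuous hfpos
    obtain ⟨ε₂, hε₂, hhyg₂⟩ := hyg t₀
    set ε := min ε₁ ε₂ with hε
    have hεpos : 0 < ε := lt_min hε₁ hε₂
    have ht₀O : t₀ ∉ O := fun hmem => h0 (hOZ t₀ hmem)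
    have hcd : ContDiffAt ℝ (⊤ : ℕ∞) (fun t => σ t₀ * Real.sqrt (f t)) t₀ := by
      apply ContDiffAt.mul contDiffAt_const
      exact (Real.contDiffAt_sqrt hfpos.ne').comp t₀ hf.contDiffAt
    apply hcd.congr_of_eventuallyEq
    have : ∀ t, |t - t₀| ≤ ε → σ t = σ t₀ :=
      hconst t₀ ε ht₀O (fun s hs hst habs => hhyg₂ s hs hst (le_trans habs (min_le_right _ _)))
    rw [Filter.eventuallyEq_iff_exists_mem]
    exact ⟨Metric.closedBall t₀ ε, Metric.closedBall_mem_nhds t₀ hεpos,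
      fun t ht => by
        show σ t * Real.sqrt (f t) = σ t₀ * Real.sqrt (f t)
        rw [this t (by simpa [Real.dist_eq] using ht)]⟩
end

section
/- If f : ℝ → ℝ is C² and f(t) ≥ 0 for all t, then there exists a C¹ function x : ℝ → ℝ with x(t)² = f(t) for all t. -/
open Set Filter Topology


lemma taylor2 {f : ℝ → ℝ} (hf : ContDiff ℝ 2 f) {a b : ℝ} (hab : a < b) :
    ∃ ξ ∈ Set.Ioo a b,
      f b = f a + deriv f a * (b - a) + deriv (deriv f) ξ * (b - a) ^ 2 / 2 := by
  have hf2 : ContDiff ℝ ((1 : ℕ) + 1 : ℕ) f := by exact_mod_cast hf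
  have hu : UniqueDiffOn ℝ (Icc a b) := uniqueDiffOn_Icc hab
  have hdiff : Differentiable ℝ f := hf.differentiable (by norm_num)
  have hd1 : ∀ x ∈ Ioo a b, iteratedDerivWithin 1 f (Icc a b) x = deriv f x := by
    intro x hx
    rw [iteratedDerivWithin_one,
      derivWithin_of_mem_nhds (Icc_mem_nhds hx.1 hx.2)]
  have hdf : Differentiable ℝ (deriv f) := by
    have := (contDiff_succ_iff_deriv (n := 1)).mp hf2
    exact this.2.2.differentiable one_ne_zero
  have hf' : DifferentiableOn ℝ (iteratedDerivWithin 1 f (Icc a b)) (Ioo a b) := by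
    apply DifferentiableOn.congr ((hdf.differentiableOn).mono Ioo_subset_Icc_self) hd1
  obtain ⟨ξ, hξ, h⟩ := taylor_mean_remainder_lagrange (n := 1) hab.ne
    (by rw [uIcc_of_le hab.le]; exact hf.contDiffOn.of_le (by norm_num))
    (by rw [uIcc_of_le hab.le, uIoo_of_le hab.le]; exact hf')
  rw [uIcc_of_le hab.le] at h
  rw [uIoo_of_le hab.le] at hξ
  refine ⟨ξ, hξ, ?_⟩
  have h2 : iteratedDerivWithin 2 f (Icc a b) ξ = deriv (deriv f) ξ := by
    have e1 : iteratedDerivWithin 2 f (Icc a b) ξ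
        = derivWithin (iteratedDerivWithin 1 f (Icc a b)) (Icc a b) ξ := by
      rw [iteratedDerivWithin_succ]
    rw [e1, derivWithin_of_mem_nhds (Icc_mem_nhds hξ.1 hξ.2)]
    apply Filter.EventuallyEq.deriv_eq
    filter_upwards [isOpen_Ioo.mem_nhds hξ] with y hy using hd1 y hy
  have htp : taylorWithinEval f 1 (Icc a b) a b
      = f a + deriv f a * (b - a) := by
    rw [taylorWithinEval_succ, taylor_within_zero_eval,
      iteratedDerivWithin_one,
      (hdiff a).derivWithin (hu a (by simp [hab.le]))]
    simp
    ring
  rw [h2, htp] at h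
  norm_num [Nat.factorial] at h
  linarith [h]

lemma taylor2' {f : ℝ → ℝ} (hf : ContDiff ℝ 2 f) {z t : ℝ} (h : z ≠ t) :
    ∃ ξ ∈ Set.Ioo (min z t) (max z t),
      f t = f z + deriv f z * (t - z) + deriv (deriv f) ξ * (t - z) ^ 2 / 2 := by
  rcases h.lt_or_gt with hlt | hlt
  · obtain ⟨ξ, hξ, he⟩ := taylor2 hf hlt
    exact ⟨ξ, by simpa [min_eq_left hlt.le, max_eq_right hlt.le] using hξ, he⟩
  · -- t < z : reflect
    set g : ℝ → ℝ := fun s => f (z + t - s) with hg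
    have hgc : ContDiff ℝ 2 g := hf.comp (contDiff_const.sub contDiff_id)
    have hdiff : Differentiable ℝ f := hf.differentiable (by norm_num)
    have hdf : Differentiable ℝ (deriv f) := by
      have hf2 : ContDiff ℝ ((1 : ℕ) + 1 : ℕ) f := by exact_mod_cast hf
      exact ((contDiff_succ_iff_deriv (n := 1)).mp hf2).2.2.differentiable one_ne_zero
    have hu : ∀ s : ℝ, HasDerivAt (fun s : ℝ => z + t - s) (-1) s := by
      intro s
      simpa using (hasDerivAt_id s).const_sub (z + t)
    have hg1 : ∀ s, HasDerivAt g (-(deriv f (z + t - s))) s := by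
      intro s
      have := ((hdiff (z + t - s)).hasDerivAt).comp s (hu s)
      simpa [mul_comm, Function.comp_def] using this
    have hg1' : deriv g = fun s => -(deriv f (z + t - s)) := by
      funext s; exact (hg1 s).deriv
    have hg2 : ∀ s, deriv (deriv g) s = deriv (deriv f) (z + t - s) := by
      intro s
      rw [hg1']
      have : HasDerivAt (fun s => -(deriv f (z + t - s)))
          (deriv (deriv f) (z + t - s)) s := by
        have := (((hdf (z + t - s)).hasDerivAt).comp s (hu s)).neg
        simpa [mul_comm, Function.comp_def, Pi.neg_def] using this
      exact this.deriv
    obtain ⟨ξ, hξ, he⟩ := taylor2 hgc hlt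
    have hmin : min z t = t := min_eq_right hlt.le
    have hmax : max z t = z := max_eq_left hlt.le
    refine ⟨z + t - ξ, ?_, ?_⟩
    · rw [hmin, hmax]
      exact ⟨by linarith [hξ.2], by linarith [hξ.1]⟩
    · have e0 : g z = f t := by simp [hg]
      have e1 : g t = f z := by
        have : z + t - t = z := by ring
        simp [hg, this]
      have e2 : deriv g t = -(deriv f z) := by
        rw [(hg1 t).deriv]
        have : z + t - t = z := by ring
        rw [this]
      rw [e0, e1, e2, hg2 ξ] at he
      rw [he]; ring


variable (f : ℝ → ℝ)

def Zf : Set ℝ := {t | f t = 0}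
def Ff : Set ℝ := {t | f t = 0 ∧ 0 < deriv (deriv f) t}

def relS (s t : ℝ) : Prop := (Zf f ∩ Set.uIcc s t).Finite

lemma relS_refl (t : ℝ) : relS f t t := by
  apply Set.Finite.subset (Set.finite_singleton t)
  simp [Set.uIcc_self]

lemma relS_symm {s t : ℝ} (h : relS f s t) : relS f t s := by
  rwa [relS, Set.uIcc_comm]

lemma relS_trans {s t u : ℝ} (h1 : relS f s t) (h2 : relS f t u) : relS f s u := by
  apply Set.Finite.subset (h1.union h2)
  rw [← Set.inter_union_distrib_left]
  exact Set.inter_subset_inter_right _ (Set.uIcc_subset_uIcc_union_uIcc)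

def sdS : Setoid ℝ := ⟨relS f, ⟨relS_refl f, fun h => relS_symm f h, fun h1 h2 => relS_trans f h1 h2⟩⟩

noncomputable def repS (t : ℝ) : ℝ := (Quotient.mk (sdS f) t).out

lemma repS_rel (t : ℝ) : relS f (repS f t) t :=
  Quotient.exact (Quotient.out_eq (Quotient.mk (sdS f) t))

lemma repS_eq {s t : ℝ} (h : relS f s t) : repS f s = repS f t := by
  unfold repS
  congr 1
  exact Quotient.sound h

noncomputable def mF (a b : ℝ) : ℕ := (Ff f ∩ Set.Ioc (min a b) (max a b)).ncard

lemma mF_symm (a b : ℝ) : mF f a b = mF f b a := by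
  simp [mF, min_comm, max_comm]

lemma mF_subset (a b : ℝ) : Ff f ∩ Set.Ioc (min a b) (max a b) ⊆ Zf f ∩ Set.uIcc a b := by
  intro u hu
  exact ⟨hu.1.1, Set.Ioc_subset_Icc_self hu.2⟩

lemma mF_fin {a b : ℝ} (h : relS f a b) : (Ff f ∩ Set.Ioc (min a b) (max a b)).Finite :=
  h.subset (mF_subset f a b)

lemma mF_finIoc {a b : ℝ} (h : relS f a b) (hab : a ≤ b) : (Ff f ∩ Set.Ioc a b).Finite := by
  have := mF_fin f h
  rwa [min_eq_left hab, max_eq_right hab] at this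

lemma mF_add {a b c : ℝ} (hab : a ≤ b) (hbc : b ≤ c)
    (h1 : (Ff f ∩ Set.Ioc a b).Finite) (h2 : (Ff f ∩ Set.Ioc b c).Finite) :
    mF f a c = mF f a b + mF f b c := by
  have hac : a ≤ c := hab.trans hbc
  unfold mF
  rw [min_eq_left hac, max_eq_right hac, min_eq_left hab, max_eq_right hab,
    min_eq_left hbc, max_eq_right hbc, ← Set.Ioc_union_Ioc_eq_Ioc hab hbc,
    Set.inter_union_distrib_left]
  rw [Set.ncard_union_eq ?_ h1 h2]
  · exact Set.disjoint_of_subset inter_subset_right inter_subset_right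
      (Set.Ioc_disjoint_Ioc_of_le le_rfl)
  
lemma parity3 {a b c : ℝ} (hab : relS f a b) (hbc : relS f b c) :
    Even (mF f a b + mF f b c + mF f a c) := by
  have hac : relS f a c := relS_trans f hab hbc
  have hba := relS_symm f hab
  have hcb := relS_symm f hbc
  have hca := relS_symm f hac
  rw [Nat.even_iff]
  rcases le_total a b with h1 | h1
  · rcases le_total b c with h2 | h2
    · have := mF_add f h1 h2 (mF_finIoc f hab h1) (mF_finIoc f hbc h2)
      omega
    · rcases le_total a c with h3 | h3
      · have := mF_add f h3 h2 (mF_finIoc f hac h3) (mF_finIoc f hcb h2)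
        rw [mF_symm f c b] at this; omega
      · have := mF_add f h3 h1 (mF_finIoc f hca h3) (mF_finIoc f hab h1)
        rw [mF_symm f c b, mF_symm f c a] at this; omega
  · rcases le_total b c with h2 | h2
    · rcases le_total a c with h3 | h3
      · have := mF_add f h1 h3 (mF_finIoc f hba h1) (mF_finIoc f hac h3)
        rw [mF_symm f b a] at this; omega
      · have := mF_add f h2 h3 (mF_finIoc f hbc h2) (mF_finIoc f hca h3)
        rw [mF_symm f b a, mF_symm f c a] at this; omega
    · have := mF_add f h2 h1 (mF_finIoc f hcb h2) (mF_finIoc f hba h1)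
      rw [mF_symm f c a, mF_symm f c b, mF_symm f b a] at this; omega

noncomputable def eps (t : ℝ) : ℝ := (-1) ^ (mF f (repS f t) t)

lemma eps_mul_self (t : ℝ) : eps f t * eps f t = 1 := by
  unfold eps
  rw [← pow_add]
  exact Even.neg_one_pow (Even.add_self _)

lemma eps_eq {s t : ℝ} (h : relS f s t) : eps f t = eps f s * (-1) ^ (mF f s t) := by
  set a := repS f s with ha
  have hrt : repS f t = a := (repS_eq f h).symm
  have has : relS f a s := repS_rel f s
  have hat : relS f a t := relS_trans f has h
  have hev := parity3 f has h
  have h1 : ((-1 : ℝ)) ^ (mF f a s + mF f s t + mF f a t) = 1 := Even.neg_one_pow hev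
  rw [pow_add, pow_add] at h1
  have hsq : ((-1 : ℝ)) ^ (mF f a t) * (-1) ^ (mF f a t) = 1 := by
    rw [← pow_add]; exact Even.neg_one_pow (Even.add_self _)
  unfold eps
  rw [hrt, ← ha]
  linear_combination ((-1:ℝ) ^ (mF f a s) * (-1:ℝ) ^ (mF f s t)) * hsq - ((-1:ℝ) ^ (mF f a t)) * h1

lemma uIcc_subset_ball {s t u δ : ℝ} (hs : dist s t < δ) (hu : u ∈ Set.uIcc s t) :
    u ∈ Metric.ball t δ := by
  rw [Real.dist_eq] at hs
  rw [Set.mem_uIcc] at hu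
  rw [Metric.mem_ball, Real.dist_eq]
  rcases abs_lt.mp hs with ⟨h1, h2⟩
  rcases hu with ⟨ha, hb⟩ | ⟨ha, hb⟩ <;> rw [abs_lt] <;> constructor <;> linarith

lemma eps_const {t δ : ℝ} (hball : ∀ u ∈ Metric.ball t δ, f u ≠ 0) :
    ∀ s ∈ Metric.ball t δ, eps f s = eps f t := by
  intro s hs
  rw [Metric.mem_ball] at hs
  have hsub : Set.uIcc t s ⊆ Metric.ball t δ := by
    intro u hu
    exact uIcc_subset_ball (by rwa [dist_comm] at hs ⊢ : dist s t < δ)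
      (by rwa [Set.uIcc_comm] at hu)
  have hrel : relS f t s := by
    have : Zf f ∩ Set.uIcc t s = ∅ := by
      ext u
      simp only [Set.mem_inter_iff, Set.mem_empty_iff_false, iff_false, not_and]
      intro hz hu
      exact absurd hz (hball u (hsub hu))
    rw [relS, this]
    exact Set.finite_empty
  have hm : mF f t s = 0 := by
    have : Ff f ∩ Set.Ioc (min t s) (max t s) = ∅ := by
      ext u
      simp only [Set.mem_inter_iff, Set.mem_empty_iff_false, iff_false, not_and]
      intro hz hu
      have : u ∈ Set.uIcc t s := Set.Ioc_subset_Icc_self hu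
      exact absurd hz.1 (hball u (hsub this))
    rw [mF, this, Set.ncard_empty]
  rw [eps_eq f hrel, hm, pow_zero, mul_one]

lemma eps_flip {z δ : ℝ} (hz : f z = 0) (hz2 : 0 < deriv (deriv f) z)
    (hball : ∀ u ∈ Metric.ball z δ, u ≠ z → f u ≠ 0) :
    ∀ t ∈ Metric.ball z δ, (z < t → eps f t = eps f z) ∧ (t < z → eps f t = - eps f z) := by
  intro t ht
  rw [Metric.mem_ball] at ht
  have hsub : Set.uIcc z t ⊆ Metric.ball z δ := by
    intro u hu
    exact uIcc_subset_ball (by rwa [dist_comm] at ht ⊢ : dist t z < δ)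
      (by rwa [Set.uIcc_comm] at hu)
  have hrel : relS f z t := by
    apply Set.Finite.subset (Set.finite_singleton z)
    intro u ⟨hu1, hu2⟩
    by_contra hne
    exact absurd hu1 (hball u (hsub hu2) hne)
  constructor
  · intro hlt
    have hm : mF f z t = 0 := by
      have : Ff f ∩ Set.Ioc (min z t) (max z t) = ∅ := by
        rw [min_eq_left hlt.le, max_eq_right hlt.le]
        ext u
        simp only [Set.mem_inter_iff, Set.mem_empty_iff_false, iff_false, not_and]
        intro hu1 hu2
        have hu3 : u ∈ Set.uIcc z t := by
          rw [Set.uIcc_of_le hlt.le]; exact Set.Ioc_subset_Icc_self hu2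
        exact absurd hu1.1 (hball u (hsub hu3) (ne_of_gt hu2.1))
      rw [mF, this, Set.ncard_empty]
    rw [eps_eq f hrel, hm, pow_zero, mul_one]
  · intro hlt
    have hm : mF f z t = 1 := by
      have : Ff f ∩ Set.Ioc (min z t) (max z t) = {z} := by
        rw [min_eq_right hlt.le, max_eq_left hlt.le]
        ext u
        simp only [Set.mem_inter_iff, Set.mem_singleton_iff]
        constructor
        · rintro ⟨hu1, hu2⟩
          by_contra hne
          have hu3 : u ∈ Set.uIcc z t := by
            rw [Set.uIcc_of_ge hlt.le]; exact Set.Ioc_subset_Icc_self hu2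
          exact absurd hu1.1 (hball u (hsub hu3) hne)
        · rintro rfl
          exact ⟨⟨hz, hz2⟩, ⟨hlt, le_refl _⟩⟩
      rw [mF, this, Set.ncard_singleton]
    rw [eps_eq f hrel, hm, pow_one, mul_comm, neg_one_mul]

lemma deriv_zero_at_zero {f : ℝ → ℝ} (hpos : ∀ t, 0 ≤ f t) {z : ℝ} (hz : f z = 0) :
    deriv f z = 0 := by
  apply IsLocalMin.deriv_eq_zero
  apply Filter.Eventually.of_forall
  intro u
  rw [hz]
  exact hpos u

lemma derivBound {f : ℝ → ℝ} (hf : ContDiff ℝ 2 f) (hpos : ∀ t, 0 ≤ f t)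
    {t δ M h : ℝ} (hM : ∀ s ∈ Set.Icc (t - δ) (t + δ), deriv (deriv f) s ≤ M)
    (h0 : 0 < h) (hh : h ≤ δ) :
    |deriv f t| ≤ f t / h + h * M / 2 := by
  have key : ∀ e : ℝ, |e| = h → -(deriv f t) * e ≤ f t + h ^ 2 * M / 2 := by
    intro e he
    have hene : e ≠ 0 := by
      intro hc; rw [hc] at he; simp at he; linarith
    have hne : t ≠ t + e := by
      intro hc; apply hene; linarith [hc.symm ▸ (by ring : t + e - e = t)]
    obtain ⟨ξ, hξ, heq⟩ := taylor2' hf hne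
    have hea : -h ≤ e ∧ e ≤ h := ⟨by nlinarith [neg_abs_le e], by nlinarith [le_abs_self e]⟩
    have hξI : ξ ∈ Set.Icc (t - δ) (t + δ) := by
      have hmin : t - h ≤ min t (t + e) := le_min (by linarith) (by linarith [hea.1])
      have hmax : max t (t + e) ≤ t + h := max_le (by linarith) (by linarith [hea.2])
      exact ⟨by linarith [hξ.1], by linarith [hξ.2]⟩
    have hMξ := hM ξ hξI
    have hsub : t + e - t = e := by ring
    rw [hsub] at heq
    have hfte : (0:ℝ) ≤ f t + deriv f t * e + deriv (deriv f) ξ * e ^ 2 / 2 := by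
      rw [← heq]; exact hpos (t + e)
    have he2 : e ^ 2 = h ^ 2 := by rw [← sq_abs, he]
    rw [he2] at hfte
    have hint := mul_nonneg (sub_nonneg.mpr hMξ) (sq_nonneg h)
    nlinarith [hint, hfte]
  have hrw : (f t / h + h * M / 2) * h = f t + h ^ 2 * M / 2 := by
    field_simp
  rw [abs_le]
  constructor
  · rw [← mul_le_mul_iff_left₀ h0, neg_mul, hrw]
    have := key h (abs_of_pos h0)
    linarith
  · rw [← mul_le_mul_iff_left₀ h0, hrw]
    have := key (-h) (by rw [abs_neg, abs_of_pos h0])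
    linarith

noncomputable def xfun (f : ℝ → ℝ) (t : ℝ) : ℝ := eps f t * Real.sqrt (f t)

noncomputable def gfun (f : ℝ → ℝ) (t : ℝ) : ℝ :=
  eps f t * (if f t = 0 then Real.sqrt (deriv (deriv f) t / 2)
    else deriv f t / (2 * Real.sqrt (f t)))

lemma eps_abs (f : ℝ → ℝ) (t : ℝ) : |eps f t| = 1 := by
  rcases mul_self_eq_one_iff.mp (eps_mul_self f t) with h | h <;> rw [h] <;> norm_num

lemma f_diff {f : ℝ → ℝ} (hf : ContDiff ℝ 2 f) : Differentiable ℝ f :=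
  hf.differentiable (by norm_num)

lemma df_contDiff {f : ℝ → ℝ} (hf : ContDiff ℝ 2 f) : ContDiff ℝ 1 (deriv f) := by
  have hf2 : ContDiff ℝ ((1 : ℕ) + 1 : ℕ) f := by exact_mod_cast hf
  exact ((contDiff_succ_iff_deriv (n := 1)).mp hf2).2.2

lemma df_diff {f : ℝ → ℝ} (hf : ContDiff ℝ 2 f) : Differentiable ℝ (deriv f) :=
  (df_contDiff hf).differentiable one_ne_zero

lemma df_cont {f : ℝ → ℝ} (hf : ContDiff ℝ 2 f) : Continuous (deriv f) :=
  (df_diff hf).continuous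

lemma ddf_cont {f : ℝ → ℝ} (hf : ContDiff ℝ 2 f) : Continuous (deriv (deriv f)) :=
  (contDiff_one_iff_deriv.mp (df_contDiff hf)).2

-- ==================== Case U : f t ≠ 0 ====================
lemma caseU {f : ℝ → ℝ} (hf : ContDiff ℝ 2 f) (hpos : ∀ t, 0 ≤ f t)
    {t : ℝ} (ht : f t ≠ 0) :
    HasDerivAt (xfun f) (gfun f t) t ∧ ContinuousAt (gfun f) t := by
  have htpos : 0 < f t := lt_of_le_of_ne (hpos t) (Ne.symm ht)
  have hev : ∀ᶠ u in 𝓝 t, 0 < f u :=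
    hf.continuous.continuousAt.eventually_mem (Ioi_mem_nhds htpos)
  obtain ⟨δ, hδ, hball⟩ := Metric.eventually_nhds_iff_ball.mp hev
  have hne : ∀ u ∈ Metric.ball t δ, f u ≠ 0 := fun u hu => ne_of_gt (hball u hu)
  have heps := eps_const f hne
  have hsq : Real.sqrt (f t) ≠ 0 := ne_of_gt (Real.sqrt_pos.mpr htpos)
  -- HasDerivAt
  have hsf : HasDerivAt (fun u => Real.sqrt (f u))
      (1 / (2 * Real.sqrt (f t)) * deriv f t) t :=
    (Real.hasDerivAt_sqrt ht).comp t ((f_diff hf) t).hasDerivAt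
  have hder : HasDerivAt (fun u => eps f t * Real.sqrt (f u))
      (eps f t * (1 / (2 * Real.sqrt (f t)) * deriv f t)) t := hsf.const_mul _
  have hxeq : (fun u => eps f t * Real.sqrt (f u)) =ᶠ[𝓝 t] xfun f := by
    filter_upwards [Metric.ball_mem_nhds t hδ] with u hu
    rw [xfun, heps u hu]
  have hgt : gfun f t = eps f t * (1 / (2 * Real.sqrt (f t)) * deriv f t) := by
    rw [gfun, if_neg ht]; ring
  constructor
  · rw [hgt]
    exact hder.congr_of_eventuallyEq hxeq.symm
  · have hgeq : (fun u => eps f t * (deriv f u / (2 * Real.sqrt (f u)))) =ᶠ[𝓝 t] gfun f := by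
      filter_upwards [Metric.ball_mem_nhds t hδ] with u hu
      rw [gfun, if_neg (hne u hu), heps u hu]
    apply ContinuousAt.congr _ hgeq
    apply ContinuousAt.mul continuousAt_const
    apply ContinuousAt.div (df_cont hf).continuousAt
    · exact (continuous_const.mul (Real.continuous_sqrt.comp hf.continuous)).continuousAt
    · simpa using hsq

-- ==================== Case Z0 : f z = 0, f'' z ≤ 0 ====================
lemma xfun_zero {f : ℝ → ℝ} {z : ℝ} (hz : f z = 0) : xfun f z = 0 := by
  rw [xfun, hz, Real.sqrt_zero, mul_zero]

lemma ball_subset_Icc {z t δ₁ δ₂ : ℝ} (h : dist t z < δ₂) (hle : 2 * δ₂ ≤ δ₁) :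
    Set.Icc (t - δ₂) (t + δ₂) ⊆ Metric.ball z δ₁ := by
  intro s hs
  rw [Metric.mem_ball, Real.dist_eq]
  rw [Real.dist_eq] at h
  rcases abs_lt.mp h with ⟨h1, h2⟩
  rcases hs with ⟨h3, h4⟩
  rw [abs_lt]
  constructor <;> linarith

lemma sqrt_f_bound {f : ℝ → ℝ} (hf : ContDiff ℝ 2 f) (hpos : ∀ t, 0 ≤ f t)
    {z ρ δ : ℝ} (hρ : 0 < ρ) (hz : f z = 0)
    (hδball : ∀ s ∈ Metric.ball z δ, deriv (deriv f) s < ρ ^ 2)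
    {t : ℝ} (htb : dist t z < δ) (htz : t ≠ z) :
    Real.sqrt (f t) ≤ ρ * |t - z| := by
  obtain ⟨ξ, hξ, heq⟩ := taylor2' hf (Ne.symm htz)
  have hξb : ξ ∈ Metric.ball z δ := by
    rw [Metric.mem_ball, Real.dist_eq]
    rw [Real.dist_eq] at htb
    rcases abs_lt.mp htb with ⟨h1, h2⟩
    have hmin : t - z ≤ 0 ∨ 0 ≤ t - z := le_or_gt (t - z) 0 |>.imp id le_of_lt
    have l1 := hξ.1; have l2 := hξ.2
    rw [abs_lt]
    rcases le_total z t with hc | hc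
    · rw [min_eq_left hc] at l1
      rw [max_eq_right hc] at l2
      constructor <;> linarith
    · rw [min_eq_right hc] at l1
      rw [max_eq_left hc] at l2
      constructor <;> linarith
  have hdd := hδball ξ hξb
  have hf0 : f t ≤ ρ ^ 2 * (t - z) ^ 2 := by
    rw [heq, hz, deriv_zero_at_zero hpos hz]
    have := sq_nonneg (t - z)
    nlinarith [this, hdd]
  calc Real.sqrt (f t) ≤ Real.sqrt (ρ ^ 2 * (t - z) ^ 2) := Real.sqrt_le_sqrt hf0
    _ = ρ * |t - z| := by
        rw [Real.sqrt_mul (sq_nonneg ρ), Real.sqrt_sq hρ.le, Real.sqrt_sq_eq_abs]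

lemma caseZ0 {f : ℝ → ℝ} (hf : ContDiff ℝ 2 f) (hpos : ∀ t, 0 ≤ f t)
    {z : ℝ} (hz : f z = 0) (h2 : deriv (deriv f) z ≤ 0) :
    HasDerivAt (xfun f) (gfun f z) z ∧ ContinuousAt (gfun f) z := by
  have hgz : gfun f z = 0 := by
    rw [gfun, if_pos hz, Real.sqrt_eq_zero'.mpr (by linarith), mul_zero]
  constructor
  · rw [hgz, hasDerivAt_iff_tendsto_slope]
    rw [Metric.tendsto_nhdsWithin_nhds]
    intro ρ hρ
    have hcont : ∀ᶠ s in 𝓝 z, deriv (deriv f) s < (ρ/2) ^ 2 :=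
      (ddf_cont hf).continuousAt.eventually_mem
        (Iio_mem_nhds (lt_of_le_of_lt h2 (by positivity)))
    obtain ⟨δ, hδ, hball⟩ := Metric.eventually_nhds_iff_ball.mp hcont
    refine ⟨δ, hδ, fun {t} htz htb => ?_⟩
    have hb := sqrt_f_bound hf hpos (by positivity : (0:ℝ) < ρ/2) hz hball htb htz
    rw [slope_def_field, xfun_zero hz, sub_zero, Real.dist_eq, sub_zero]
    have htzne : t - z ≠ 0 := sub_ne_zero.mpr htz
    have habs : |xfun f t / (t - z)| ≤ ρ/2 := by
      rw [abs_div, xfun, abs_mul, eps_abs, one_mul,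
        abs_of_nonneg (Real.sqrt_nonneg _)]
      rw [div_le_iff₀ (abs_pos.mpr htzne)]
      calc Real.sqrt (f t) ≤ ρ/2 * |t - z| := hb
        _ = ρ/2 * |t - z| := rfl
    calc |xfun f t / (t - z)| ≤ ρ/2 := habs
      _ < ρ := by linarith
  · rw [ContinuousAt, hgz, Metric.tendsto_nhds]
    intro ρ hρ
    set ρ' := ρ/2 with hρ'def
    have hρ' : 0 < ρ' := by positivity
    have hcont : ∀ᶠ s in 𝓝 z, deriv (deriv f) s < ρ' ^ 2 :=
      (ddf_cont hf).continuousAt.eventually_mem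
        (Iio_mem_nhds (lt_of_le_of_lt h2 (by positivity)))
    obtain ⟨δ₁, hδ₁, hball₁⟩ := Metric.eventually_nhds_iff_ball.mp hcont
    set δ₂ := δ₁ / 4 with hδ₂def
    have hδ₂ : 0 < δ₂ := by positivity
    have hcf : ∀ᶠ s in 𝓝 z, f s < ρ' ^ 2 * δ₂ ^ 2 / 4 :=
      hf.continuous.continuousAt.eventually_mem
        (Iio_mem_nhds (by rw [hz]; positivity))
    obtain ⟨δ₃, hδ₃, hball₃⟩ := Metric.eventually_nhds_iff_ball.mp hcf
    refine Metric.eventually_nhds_iff_ball.mpr ⟨min δ₂ δ₃, by positivity, fun t htb => ?_⟩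
    have htb₂ : dist t z < δ₂ := lt_of_lt_of_le (Metric.mem_ball.mp htb) (min_le_left _ _)
    have htb₃ : t ∈ Metric.ball z δ₃ :=
      Metric.mem_ball.mp htb |>.trans_le (min_le_right _ _) |> Metric.mem_ball.mpr
    have hft : f t < ρ' ^ 2 * δ₂ ^ 2 / 4 := hball₃ t htb₃
    rw [Real.dist_eq, sub_zero]
    by_cases hftz : f t = 0
    · rw [gfun, if_pos hftz, abs_mul, eps_abs, one_mul,
        abs_of_nonneg (Real.sqrt_nonneg _)]
      have h1 : deriv (deriv f) t < ρ' ^ 2 := by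
        apply hball₁
        rw [Metric.mem_ball]
        calc dist t z < δ₂ := htb₂
          _ < δ₁ := by rw [hδ₂def]; linarith
      calc Real.sqrt (deriv (deriv f) t / 2) ≤ Real.sqrt (ρ' ^ 2 / 2) :=
            Real.sqrt_le_sqrt (by linarith)
        _ ≤ Real.sqrt (ρ' ^ 2) := Real.sqrt_le_sqrt (by linarith [sq_nonneg ρ'])
        _ = ρ' := Real.sqrt_sq hρ'.le
        _ < ρ := by rw [hρ'def]; linarith
    · -- f t > 0 : use derivBound
      have hftpos : 0 < f t := lt_of_le_of_ne (hpos t) (Ne.symm hftz)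
      set q := Real.sqrt (f t) with hq
      have hqpos : 0 < q := Real.sqrt_pos.mpr hftpos
      have hq2 : q ^ 2 = f t := Real.sq_sqrt (hpos t)
      set h := 2 * q / ρ' with hh
      have hhpos : 0 < h := by positivity
      have hhle : h ≤ δ₂ := by
        rw [hh, div_le_iff₀ hρ']
        nlinarith [hft, hq2, mul_pos hδ₂ hρ']
      have hM : ∀ s ∈ Set.Icc (t - δ₂) (t + δ₂), deriv (deriv f) s ≤ ρ' ^ 2 := by
        intro s hs
        exact le_of_lt (hball₁ s (ball_subset_Icc htb₂ (by rw [hδ₂def]; linarith) hs))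
      have hdb := derivBound hf hpos hM hhpos hhle
      have hval : f t / h + h * ρ' ^ 2 / 2 = 3 / 2 * ρ' * q := by
        rw [hh, ← hq2]
        field_simp
        ring
      rw [gfun, if_neg hftz, abs_mul, eps_abs, one_mul, abs_div]
      rw [abs_of_nonneg (by positivity : (0:ℝ) ≤ 2 * Real.sqrt (f t)), ← hq]
      rw [div_lt_iff₀ (by positivity)]
      calc |deriv f t| ≤ f t / h + h * ρ' ^ 2 / 2 := hdb
        _ = 3 / 2 * ρ' * q := hval
        _ < ρ * (2 * q) := by rw [hρ'def]; nlinarith [mul_pos hqpos hρ]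

-- ==================== Case flip : f z = 0, f'' z > 0 ====================
lemma xi_ball {z t ξ δ : ℝ} (hξ : ξ ∈ Set.Ioo (min z t) (max z t))
    (htb : dist t z < δ) : ξ ∈ Metric.ball z δ := by
  rw [Metric.mem_ball, Real.dist_eq]
  rw [Real.dist_eq] at htb
  rcases abs_lt.mp htb with ⟨h1, h2⟩
  have l1 := hξ.1; have l2 := hξ.2
  rw [abs_lt]
  rcases le_total z t with hc | hc
  · rw [min_eq_left hc] at l1
    rw [max_eq_right hc] at l2
    constructor <;> linarith
  · rw [min_eq_right hc] at l1
    rw [max_eq_left hc] at l2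
    constructor <;> linarith

lemma caseF {f : ℝ → ℝ} (hf : ContDiff ℝ 2 f) (hpos : ∀ t, 0 ≤ f t)
    {z : ℝ} (hz : f z = 0) (h2 : 0 < deriv (deriv f) z) :
    HasDerivAt (xfun f) (gfun f z) z ∧ ContinuousAt (gfun f) z := by
  set c := deriv (deriv f) z with hc
  have hf'z : deriv f z = 0 := deriv_zero_at_zero hpos hz
  have hev : ∀ᶠ s in 𝓝 z, c / 2 < deriv (deriv f) s :=
    (ddf_cont hf).continuousAt.eventually_mem (Ioi_mem_nhds (by linarith))
  obtain ⟨δ₀, hδ₀, hb₀⟩ := Metric.eventually_nhds_iff_ball.mp hev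
  have htay : ∀ t : ℝ, t ≠ z → ∃ ξ ∈ Set.Ioo (min z t) (max z t),
      f t = (t - z) ^ 2 * (deriv (deriv f) ξ / 2) := by
    intro t htne
    obtain ⟨ξ, hξ, heq⟩ := taylor2' hf (Ne.symm htne)
    exact ⟨ξ, hξ, by rw [heq, hz, hf'z]; ring⟩
  have hposball : ∀ t ∈ Metric.ball z δ₀, t ≠ z → 0 < f t := by
    intro t htb htne
    obtain ⟨ξ, hξ, heq⟩ := htay t htne
    have hξb := xi_ball hξ (Metric.mem_ball.mp htb)
    have hgt := hb₀ ξ hξb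
    have htz2 : 0 < (t - z) ^ 2 := by
      have : t - z ≠ 0 := sub_ne_zero.mpr htne
      positivity
    rw [heq]
    exact mul_pos htz2 (by linarith)
  have hne : ∀ u ∈ Metric.ball z δ₀, u ≠ z → f u ≠ 0 :=
    fun u hu hune => ne_of_gt (hposball u hu hune)
  have hflip := eps_flip f hz h2 hne
  have hgz : gfun f z = eps f z * Real.sqrt (c / 2) := by rw [gfun, if_pos hz]
  have hsqrt_id : ∀ t : ℝ, t ≠ z → ∀ ξ, f t = (t - z) ^ 2 * (deriv (deriv f) ξ / 2) →
      0 ≤ deriv (deriv f) ξ →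
      Real.sqrt (f t) = |t - z| * Real.sqrt (deriv (deriv f) ξ / 2) := by
    intro t htne ξ heq hξpos
    rw [heq, Real.sqrt_mul (sq_nonneg _), Real.sqrt_sq_eq_abs]
  -- slope identity and limit
  have hslope_eq : ∀ t : ℝ, t ∈ Metric.ball z δ₀ → t ≠ z →
      ∃ ξ ∈ Metric.ball z δ₀, |ξ - z| ≤ |t - z| ∧
        slope (xfun f) z t = eps f z * Real.sqrt (deriv (deriv f) ξ / 2) := by
    intro t htb htne
    obtain ⟨ξ, hξ, heq⟩ := htay t htne
    have hξb := xi_ball hξ (Metric.mem_ball.mp htb)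
    have hξle : |ξ - z| ≤ |t - z| := by
      have l1 := hξ.1; have l2 := hξ.2
      rcases le_total z t with hcc | hcc
      · rw [min_eq_left hcc] at l1
        rw [max_eq_right hcc] at l2
        rw [abs_of_nonneg (by linarith), abs_of_nonneg (by linarith)]
        linarith
      · rw [min_eq_right hcc] at l1
        rw [max_eq_left hcc] at l2
        rw [abs_of_nonpos (by linarith), abs_of_nonpos (by linarith)]
        linarith
    have hξpos : 0 ≤ deriv (deriv f) ξ := le_of_lt (by linarith [hb₀ ξ hξb])
    have hsq := hsqrt_id t htne ξ heq hξpos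
    refine ⟨ξ, hξb, hξle, ?_⟩
    rw [slope_def_field, xfun_zero hz, sub_zero, xfun, hsq]
    rcases lt_or_gt_of_ne htne with hlt | hlt
    · -- t < z
      have he := (hflip t htb).2 hlt
      rw [he, abs_of_nonpos (by linarith)]
      have : t - z ≠ 0 := sub_ne_zero.mpr htne
      field_simp
    · -- z < t
      have he := (hflip t htb).1 hlt
      rw [he, abs_of_nonneg (by linarith)]
      have : t - z ≠ 0 := sub_ne_zero.mpr htne
      field_simp
  have hslope : Filter.Tendsto (slope (xfun f) z) (nhdsWithin z {z}ᶜ)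
      (nhds (eps f z * Real.sqrt (c / 2))) := by
    rw [Metric.tendsto_nhdsWithin_nhds]
    intro ρ hρ
    have hc2 : ContinuousAt (fun s => Real.sqrt (deriv (deriv f) s / 2)) z :=
      (Real.continuous_sqrt.comp ((ddf_cont hf).div_const 2)).continuousAt
    obtain ⟨δ₄, hδ₄, hb₄⟩ := Metric.continuousAt_iff.mp hc2 ρ hρ
    refine ⟨min δ₀ δ₄, lt_min hδ₀ hδ₄, fun {t} htmem htd => ?_⟩
    have htne : t ≠ z := htmem
    have htb₀ : t ∈ Metric.ball z δ₀ := Metric.mem_ball.mpr (htd.trans_le (min_le_left _ _))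
    obtain ⟨ξ, hξb, hξle, hseq⟩ := hslope_eq t htb₀ htne
    rw [hseq]
    have hξd : dist ξ z < δ₄ := by
      rw [Real.dist_eq]
      rw [Real.dist_eq] at htd
      exact lt_of_le_of_lt hξle (htd.trans_le (min_le_right _ _))
    have := hb₄ hξd
    rw [Real.dist_eq] at this ⊢
    calc |eps f z * Real.sqrt (deriv (deriv f) ξ / 2) - eps f z * Real.sqrt (c / 2)|
        = |eps f z| * |Real.sqrt (deriv (deriv f) ξ / 2) - Real.sqrt (c / 2)| := by
          rw [← abs_mul]; ring_nf
      _ = |Real.sqrt (deriv (deriv f) ξ / 2) - Real.sqrt (c / 2)| := by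
          rw [eps_abs, one_mul]
      _ < ρ := this
  have hderiv : HasDerivAt (xfun f) (gfun f z) z := by
    rw [hasDerivAt_iff_tendsto_slope, hgz]
    exact hslope
  -- continuity of gfun at z
  have hcpos : 0 < Real.sqrt (c / 2) := Real.sqrt_pos.mpr (by linarith)
  have hballmem : Metric.ball z δ₀ ∈ nhdsWithin z {z}ᶜ :=
    nhdsWithin_le_nhds (Metric.ball_mem_nhds z hδ₀)
  have habs : Filter.Tendsto (fun t => Real.sqrt (f t) / |t - z|) (nhdsWithin z {z}ᶜ)
      (nhds (Real.sqrt (c / 2))) := by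
    have h1 : Filter.Tendsto (fun t => |slope (xfun f) z t|) (nhdsWithin z {z}ᶜ)
        (nhds |eps f z * Real.sqrt (c / 2)|) := hslope.abs
    have h2 : |eps f z * Real.sqrt (c / 2)| = Real.sqrt (c / 2) := by
      rw [abs_mul, eps_abs, one_mul, abs_of_nonneg (Real.sqrt_nonneg _)]
    rw [h2] at h1
    apply h1.congr'
    filter_upwards [self_mem_nhdsWithin] with t htne
    rw [slope_def_field, xfun_zero hz, sub_zero, abs_div, xfun, abs_mul, eps_abs,
      one_mul, abs_of_nonneg (Real.sqrt_nonneg _)]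
  have hA : Filter.Tendsto (fun t => deriv f t / (t - z)) (nhdsWithin z {z}ᶜ) (nhds c) := by
    have hd : HasDerivAt (deriv f) c z := ((df_diff hf) z).hasDerivAt
    have h1 := hasDerivAt_iff_tendsto_slope.mp hd
    apply h1.congr'
    filter_upwards [self_mem_nhdsWithin] with t htne
    rw [slope_def_field, hf'z, sub_zero]
  have hB : Filter.Tendsto (fun t => |t - z| / (2 * Real.sqrt (f t))) (nhdsWithin z {z}ᶜ)
      (nhds ((2 * Real.sqrt (c / 2))⁻¹)) := by
    have h2s : Filter.Tendsto (fun t => 2 * (Real.sqrt (f t) / |t - z|)) (nhdsWithin z {z}ᶜ)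
        (nhds (2 * Real.sqrt (c / 2))) := habs.const_mul 2
    have hinv := h2s.inv₀ (by positivity)
    apply hinv.congr'
    filter_upwards [hballmem, self_mem_nhdsWithin] with t htb htne
    have hft : 0 < f t := hposball t htb htne
    have hs : Real.sqrt (f t) ≠ 0 := ne_of_gt (Real.sqrt_pos.mpr hft)
    have ht : |t - z| ≠ 0 := abs_ne_zero.mpr (sub_ne_zero.mpr htne)
    field_simp
  have hval : c * (2 * Real.sqrt (c / 2))⁻¹ = Real.sqrt (c / 2) := by
    have hcg : Real.sqrt (c / 2) ^ 2 = c / 2 := Real.sq_sqrt (by linarith)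
    have hsne : Real.sqrt (c / 2) ≠ 0 := ne_of_gt hcpos
    rw [inv_eq_one_div, mul_one_div, eq_comm,
      eq_div_iff (by positivity : (2:ℝ) * Real.sqrt (c/2) ≠ 0)]
    linear_combination 2 * hcg
  have hprod : Filter.Tendsto
      (fun t => eps f z * (deriv f t / (t - z) * (|t - z| / (2 * Real.sqrt (f t)))))
      (nhdsWithin z {z}ᶜ) (nhds (gfun f z)) := by
    have := (hA.mul hB).const_mul (eps f z)
    rw [hgz, ← hval]
    exact this
  have hgev : ∀ᶠ t in nhdsWithin z {z}ᶜ,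
      eps f z * (deriv f t / (t - z) * (|t - z| / (2 * Real.sqrt (f t)))) = gfun f t := by
    filter_upwards [hballmem, self_mem_nhdsWithin] with t htb htne
    have hft : 0 < f t := hposball t htb htne
    have hs : Real.sqrt (f t) ≠ 0 := ne_of_gt (Real.sqrt_pos.mpr hft)
    have htzne : t - z ≠ 0 := sub_ne_zero.mpr htne
    rw [gfun, if_neg (ne_of_gt hft)]
    rcases lt_or_gt_of_ne (htne : t ≠ z) with hlt | hlt
    · rw [(hflip t htb).2 hlt, abs_of_nonpos (by linarith)]
      field_simp
      try ring
    · rw [(hflip t htb).1 hlt, abs_of_nonneg (by linarith)]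
      field_simp
      try ring
  have hcont : ContinuousAt (gfun f) z := by
    rw [ContinuousAt, ← nhdsNE_sup_pure z, Filter.tendsto_sup]
    exact ⟨hprod.congr' hgev, tendsto_pure_nhds _ _⟩
  exact ⟨hderiv, hcont⟩


/-- If `f : ℝ → ℝ` is `C²` and nonnegative, then there is a global `C¹`
square root `x` with `x t ^ 2 = f t` for all `t`. -/
theorem C1_sqrt_of_C2 (f : ℝ → ℝ)
    (hf : ContDiff ℝ 2 f)
    (hpos : ∀ t, 0 ≤ f t) :
    ∃ x : ℝ → ℝ, ContDiff ℝ 1 x ∧ ∀ t, x t ^ 2 = f t := by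
  refine ⟨xfun f, ?_, ?_⟩
  · have hall : ∀ t, HasDerivAt (xfun f) (gfun f t) t ∧ ContinuousAt (gfun f) t := by
      intro t
      by_cases ht : f t = 0
      · rcases le_or_gt (deriv (deriv f) t) 0 with h2 | h2
        · exact caseZ0 hf hpos ht h2
        · exact caseF hf hpos ht h2
      · exact caseU hf hpos ht
    have hdiff : Differentiable ℝ (xfun f) := fun t => ((hall t).1).differentiableAt
    have hderiv : deriv (xfun f) = gfun f := funext fun t => ((hall t).1).deriv
    rw [contDiff_one_iff_deriv]
    refine ⟨hdiff, ?_⟩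
    rw [hderiv]
    exact continuous_iff_continuousAt.mpr fun t => (hall t).2
  · intro t
    rw [xfun, mul_pow, Real.sq_sqrt (hpos t)]
    have h1 : eps f t ^ 2 = 1 := by rw [sq]; exact eps_mul_self f t
    rw [h1, one_mul]
end

section
/- The function f(t) = t²·sin²(log t) for t > 0, extended by f(0) = 0 (and f(t)=t²sin²(log(−t)) for t<0), is C¹ and nonnegative, but there is no function x differentiable at 0 with x(t)² = f(t) for all t near 0. -/
open Filter Real Topology


noncomputable def Dg (t : ℝ) : ℝ :=
  2 * t * Real.sin (Real.log t) ^ 2 + 2 * t * (Real.sin (Real.log t) * Real.cos (Real.log t))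

lemma hasDerivAt_g_ne (t : ℝ) (ht : t ≠ 0) :
    HasDerivAt (fun t : ℝ => t ^ 2 * Real.sin (Real.log t) ^ 2) (Dg t) t := by
  have hlog := Real.hasDerivAt_log ht
  have hs : HasDerivAt (fun t : ℝ => Real.sin (Real.log t))
      (Real.cos (Real.log t) * t⁻¹) t := (Real.hasDerivAt_sin _).comp t hlog
  have hs2 := hs.pow 2
  have h1 : HasDerivAt (fun t : ℝ => t ^ 2) (2 * t) t := by
    simpa using (hasDerivAt_pow 2 t)
  have := h1.mul hs2
  refine this.congr_deriv ?_
  unfold Dg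
  field_simp
  simp only [Pi.pow_apply]
  ring

lemma hasDerivAt_g_zero :
    HasDerivAt (fun t : ℝ => t ^ 2 * Real.sin (Real.log t) ^ 2) 0 0 := by
  rw [hasDerivAt_iff_tendsto_slope]
  refine squeeze_zero_norm' (a := fun t => |t|) ?_ ?_
  · filter_upwards [self_mem_nhdsWithin] with t (ht : t ≠ 0)
    have : slope (fun t : ℝ => t ^ 2 * Real.sin (Real.log t) ^ 2) 0 t
        = t * Real.sin (Real.log t) ^ 2 := by
      rw [slope_def_field]
      field_simp
      ring
    rw [this]
    have h1 : Real.sin (Real.log t) ^ 2 ≤ 1 := by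
      have := Real.neg_one_le_sin (Real.log t)
      have := Real.sin_le_one (Real.log t)
      nlinarith
    have h0 : 0 ≤ Real.sin (Real.log t) ^ 2 := sq_nonneg _
    rw [Real.norm_eq_abs, abs_mul]
    calc |t| * |Real.sin (Real.log t) ^ 2| ≤ |t| * 1 := by
          rw [abs_of_nonneg h0]; exact mul_le_mul_of_nonneg_left h1 (abs_nonneg t)
      _ = |t| := mul_one _
  · have : Filter.Tendsto (fun t : ℝ => |t|) (nhds 0) (nhds |0|) :=
      (continuous_abs.tendsto 0)
    simpa using this.mono_left nhdsWithin_le_nhds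

lemma deriv_g_eq : deriv (fun t : ℝ => t ^ 2 * Real.sin (Real.log t) ^ 2) = Dg := by
  funext t
  rcases eq_or_ne t 0 with rfl | ht
  · rw [hasDerivAt_g_zero.deriv]; simp [Dg]
  · exact (hasDerivAt_g_ne t ht).deriv

lemma continuous_Dg : Continuous Dg := by
  rw [continuous_iff_continuousAt]
  intro t
  rcases eq_or_ne t 0 with rfl | ht
  · have h0 : Dg 0 = 0 := by simp [Dg]
    rw [ContinuousAt, h0]
    refine squeeze_zero_norm (a := fun t => 4 * |t|) (fun t => ?_) ?_
    · have hs := abs_mul_abs_self (Real.sin (Real.log t))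
      have h1 : |Real.sin (Real.log t)| ≤ 1 := Real.abs_sin_le_one _
      have h2 : |Real.cos (Real.log t)| ≤ 1 := Real.abs_cos_le_one _
      have h3 : |Real.sin (Real.log t) ^ 2| ≤ 1 := by
        rw [abs_pow, sq_abs, sq]; nlinarith [abs_nonneg (Real.sin (Real.log t))]
      calc ‖Dg t‖ ≤ |2 * t * Real.sin (Real.log t) ^ 2|
            + |2 * t * (Real.sin (Real.log t) * Real.cos (Real.log t))| := abs_add_le _ _
        _ ≤ 2 * |t| * 1 + 2 * |t| * 1 := by
            rw [abs_mul, abs_mul, abs_mul, abs_mul, abs_mul]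
            have hat : (0:ℝ) ≤ |t| := abs_nonneg t
            have h2' : (|2| : ℝ) = 2 := by norm_num
            rw [h2']
            have hsc : |Real.sin (Real.log t)| * |Real.cos (Real.log t)| ≤ 1 :=
              mul_le_one₀ h1 (abs_nonneg _) h2
            gcongr
        _ = 4 * |t| := by ring
    · have : Filter.Tendsto (fun t : ℝ => 4 * |t|) (nhds 0) (nhds (4 * |0|)) := by
        exact (continuous_const.mul continuous_abs).tendsto 0
      simpa using this
  · have hlog : ContinuousAt Real.log t := Real.continuousAt_log ht
    have : ContinuousAt Dg t := by
      unfold Dg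
      fun_prop (disch := assumption)
    exact this

lemma contDiff_g : ContDiff ℝ 1 (fun t : ℝ => t ^ 2 * Real.sin (Real.log t) ^ 2) := by
  rw [contDiff_one_iff_deriv]
  constructor
  · intro t
    rcases eq_or_ne t 0 with rfl | ht
    · exact hasDerivAt_g_zero.differentiableAt
    · exact (hasDerivAt_g_ne t ht).differentiableAt
  · rw [deriv_g_eq]; exact continuous_Dg


lemma seq_tendsto (c : ℝ) :
    Tendsto (fun n : ℕ => Real.exp (c - Real.pi * n)) atTop (𝓝[≠] (0:ℝ)) := by
  rw [tendsto_nhdsWithin_iff]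
  constructor
  · apply Real.tendsto_exp_atBot.comp
    apply tendsto_atBot_add_const_left
    rw [tendsto_neg_atBot_iff]
    exact Tendsto.const_mul_atTop Real.pi_pos tendsto_natCast_atTop_atTop
  · exact Eventually.of_forall fun n => (Real.exp_pos _).ne'

lemma no_sqrt (x : ℝ → ℝ) (hx : DifferentiableAt ℝ x 0)
    (hev : ∀ᶠ t in nhds (0:ℝ), x t ^ 2 = t ^ 2 * Real.sin (Real.log t) ^ 2) : False := by
  have hx0 : x 0 = 0 := by
    have h := hev.self_of_nhds
    simpa [pow_eq_zero_iff] using h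
  set L := deriv x 0 with hL
  have hD : HasDerivAt x L 0 := hx.hasDerivAt
  have hslope : Tendsto (slope x 0) (𝓝[≠] (0:ℝ)) (𝓝 L) :=
    hasDerivAt_iff_tendsto_slope.mp hD
  have hsl : ∀ t : ℝ, slope x 0 t = x t / t := by
    intro t; rw [slope_def_field]; simp [hx0]
  -- sequence a: zeros of sin
  have ha := (hslope.comp (seq_tendsto 0))
  have hb := (hslope.comp (seq_tendsto (Real.pi/2)))
  have haev : ∀ᶠ n : ℕ in atTop, slope x 0 (Real.exp (0 - Real.pi * n)) = 0 := by
    have := ((seq_tendsto 0).mono_right nhdsWithin_le_nhds).eventually hev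
    filter_upwards [this] with n hn
    rw [hsl]
    have hlog : Real.log (Real.exp (0 - Real.pi * n)) = 0 - Real.pi * n := Real.log_exp _
    rw [hlog] at hn
    have hsin : Real.sin (0 - Real.pi * n) = 0 := by
      simp [Real.sin_nat_mul_pi, mul_comm Real.pi (n:ℝ)]
    rw [hsin] at hn
    have : x (Real.exp (0 - Real.pi * n)) = 0 := by
      have := hn; nlinarith [sq_nonneg (x (Real.exp (0 - Real.pi * n)))]
    simpa using this
  have hL0 : L = 0 := by
    have : Tendsto (fun n : ℕ => (0:ℝ)) atTop (𝓝 L) := Filter.Tendsto.congr' haev ha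
    exact tendsto_nhds_unique this tendsto_const_nhds
  -- sequence b: |sin| = 1
  have hbev : ∀ᶠ n : ℕ in atTop, (slope x 0 (Real.exp (Real.pi/2 - Real.pi * n))) ^ 2 = 1 := by
    have := ((seq_tendsto (Real.pi/2)).mono_right nhdsWithin_le_nhds).eventually hev
    filter_upwards [this] with n hn
    rw [hsl, div_pow, hn]
    have hlog : Real.log (Real.exp (Real.pi/2 - Real.pi * n)) = Real.pi/2 - Real.pi * n :=
      Real.log_exp _
    rw [hlog]
    have hsin : Real.sin (Real.pi/2 - Real.pi * n) ^ 2 = 1 := by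
      rw [Real.sin_pi_div_two_sub]
      have hs : Real.sin (Real.pi * n) = 0 := by
        rw [mul_comm]; exact Real.sin_nat_mul_pi n
      have := Real.sin_sq_add_cos_sq (Real.pi * n)
      nlinarith
    rw [hsin]
    have hne : Real.exp (Real.pi/2 - Real.pi * n) ≠ 0 := (Real.exp_pos _).ne'
    field_simp
  have hsq : Tendsto (fun n : ℕ => (slope x 0 (Real.exp (Real.pi/2 - Real.pi * n)))^2)
      atTop (𝓝 (L^2)) := hb.pow 2
  have h1 : Tendsto (fun n : ℕ => (1:ℝ)) atTop (𝓝 (L^2)) := Filter.Tendsto.congr' hbev hsq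
  have : L^2 = (1:ℝ) := tendsto_nhds_unique h1 tendsto_const_nhds
  rw [hL0] at this
  norm_num at this


/-- Example 2.3 (first): `f t = t² sin²(log |t|)` (with `f 0 = 0`) is a nonnegative
`C¹` function admitting no square root differentiable at `0`.
(Note `Real.log` already satisfies `Real.log (-t) = Real.log t` and `Real.log 0 = 0`.) -/
theorem no_differentiable_sqrt_of_C1 :
    ContDiff ℝ 1 (fun t : ℝ => t ^ 2 * Real.sin (Real.log t) ^ 2) ∧
    (∀ t : ℝ, 0 ≤ t ^ 2 * Real.sin (Real.log t) ^ 2) ∧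
    ¬ ∃ x : ℝ → ℝ, DifferentiableAt ℝ x 0 ∧
        ∀ᶠ t in nhds (0 : ℝ), x t ^ 2 = t ^ 2 * Real.sin (Real.log t) ^ 2 := by
  refine ⟨contDiff_g, fun t => by positivity, ?_⟩
  rintro ⟨x, hx, hev⟩
  exact no_sqrt x hx hev
end

section
/- The function f(t) = t⁴·sin²(1/t) for t ≠ 0, f(0) = 0, is twice differentiable and nonnegative, but every function x with x² = f on a neighborhood of 0 fails to be C¹ at 0. -/
open Real Filter Set

noncomputable def gg (t : ℝ) : ℝ := t ^ 4 * Real.sin (1 / t) ^ 2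
noncomputable def gg' (t : ℝ) : ℝ :=
  4 * t ^ 3 * Real.sin (1 / t) ^ 2 - 2 * t ^ 2 * Real.sin (1 / t) * Real.cos (1 / t)

lemma hA {t : ℝ} (ht : t ≠ 0) : HasDerivAt gg (gg' t) t := by
  have h1 : HasDerivAt (fun s : ℝ => 1 / s) (-(t ^ 2)⁻¹) t := by
    simpa [one_div] using hasDerivAt_inv ht
  have h2 := h1.sin
  have h3 := h2.pow 2
  have h4 := (hasDerivAt_pow 4 t).mul h3
  refine h4.congr_deriv ?_
  simp only [Pi.pow_apply]
  unfold gg'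
  field_simp
  ring

lemma hB : HasDerivAt gg 0 0 := by
  rw [hasDerivAt_iff_tendsto_slope]
  apply squeeze_zero_norm (a := fun t : ℝ => |t| ^ 3)
  · intro t
    rcases eq_or_ne t 0 with rfl | ht
    · simp [slope, gg]
    · have : slope gg 0 t = t ^ 3 * Real.sin (1 / t) ^ 2 := by
        rw [slope_def_field]; unfold gg; simp; field_simp
      rw [this]
      have h1 : Real.sin (1/t) ^ 2 ≤ 1 := by
        have := Real.neg_one_le_sin (1/t); have := Real.sin_le_one (1/t); nlinarith
      calc ‖t ^ 3 * Real.sin (1/t) ^ 2‖ = |t|^3 * Real.sin (1/t)^2 := by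
            rw [Real.norm_eq_abs, abs_mul, abs_pow, abs_of_nonneg (sq_nonneg (Real.sin (1/t)))]
        _ ≤ |t|^3 * 1 := by nlinarith [pow_nonneg (abs_nonneg t) 3]
        _ = |t|^3 := by ring
  · have : Filter.Tendsto (fun t : ℝ => |t| ^ 3) (nhds 0) (nhds 0) := by
      have := ((continuous_abs.pow 3).tendsto (0:ℝ)); rw [show (abs ^ 3) (0:ℝ) = 0 by show |(0:ℝ)| ^ 3 = 0; simp] at this; exact this
    exact this.mono_left nhdsWithin_le_nhds

lemma hC0 : HasDerivAt gg' 0 0 := by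
  rw [hasDerivAt_iff_tendsto_slope]
  apply squeeze_zero_norm (a := fun t : ℝ => 4 * |t| ^ 2 + 2 * |t|)
  · intro t
    rcases eq_or_ne t 0 with rfl | ht
    · simp [slope, gg']
    · have : slope gg' 0 t = 4 * t ^ 2 * Real.sin (1 / t) ^ 2 - 2 * t * Real.sin (1/t) * Real.cos (1/t) := by
        rw [slope_def_field]; unfold gg'; simp; field_simp
      rw [this]
      have hs := Real.abs_sin_le_one (1/t)
      have hc := Real.abs_cos_le_one (1/t)
      have h1 : |Real.sin (1/t) ^ 2| ≤ 1 := by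
        rw [abs_pow]; nlinarith [abs_nonneg (Real.sin (1/t))]
      calc ‖4 * t ^ 2 * Real.sin (1/t) ^ 2 - 2 * t * Real.sin (1/t) * Real.cos (1/t)‖
          ≤ ‖4 * t ^ 2 * Real.sin (1/t) ^ 2‖ + ‖2 * t * Real.sin (1/t) * Real.cos (1/t)‖ := norm_sub_le _ _
        _ ≤ 4 * |t| ^ 2 + 2 * |t| := by
            simp only [Real.norm_eq_abs, abs_mul]
            rw [show |(4:ℝ)| = 4 by norm_num, show |(2:ℝ)| = 2 by norm_num]
            have h2 : |Real.sin (1/t)| * |Real.cos (1/t)| ≤ 1 := by nlinarith [abs_nonneg (Real.sin (1/t)), abs_nonneg (Real.cos (1/t))]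
            have ht2 : |t^2| = |t|^2 := abs_pow t 2
            rw [ht2]
            nlinarith [abs_nonneg t, sq_nonneg (|t|), abs_nonneg (Real.sin (1/t)^2),
              abs_nonneg (Real.sin (1/t)), abs_nonneg (Real.cos (1/t))]
  · have : Filter.Tendsto (fun t : ℝ => 4 * |t| ^ 2 + 2 * |t|) (nhds 0) (nhds 0) := by
      have : Continuous (fun t : ℝ => 4 * |t| ^ 2 + 2 * |t|) := by continuity
      simpa using this.tendsto 0
    exact this.mono_left nhdsWithin_le_nhds

lemma hC {t : ℝ} (ht : t ≠ 0) : DifferentiableAt ℝ gg' t := by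
  unfold gg'
  have h1 : DifferentiableAt ℝ (fun s : ℝ => 1 / s) t := by
    simpa [one_div] using (differentiableAt_inv ht)
  fun_prop (disch := assumption)

lemma sqrt2_gt : (1.4 : ℝ) < Real.sqrt 2 := by
  nlinarith [Real.sq_sqrt (show (0:ℝ) ≤ 2 by norm_num), Real.sqrt_nonneg 2]

set_option maxHeartbeats 1000000 in
lemma part4 (x : ℝ → ℝ) (hx : ∀ᶠ t in nhds (0 : ℝ), x t ^ 2 = gg t) :
    ¬ ContDiffAt ℝ 1 x 0 := by
  intro h
  -- x 0 = 0
  have hx0 : x 0 = 0 := by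
    have h0 := hx.self_of_nhds
    simpa [gg] using h0
  -- bound |x t| ≤ t^2 eventually
  have hbound : ∀ᶠ t in nhds (0:ℝ), |x t| ≤ t ^ 2 := by
    filter_upwards [hx] with t ht
    have h1 : x t ^ 2 ≤ (t ^ 2) ^ 2 := by
      rw [ht]
      unfold gg
      have hs1 : Real.sin (1/t)^2 ≤ 1 := by
        nlinarith [Real.neg_one_le_sin (1/t), Real.sin_le_one (1/t)]
      nlinarith [mul_le_mul_of_nonneg_left hs1 (by positivity : (0:ℝ) ≤ t^4)]
    have := Real.sqrt_le_sqrt h1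
    rwa [Real.sqrt_sq_eq_abs, Real.sqrt_sq_eq_abs, abs_of_nonneg (sq_nonneg t)] at this
  -- deriv x 0 = 0
  have hdx0 : DifferentiableAt ℝ x 0 := h.differentiableAt (by norm_num)
  have hder0 : deriv x 0 = 0 := by
    have hs := hasDerivAt_iff_tendsto_slope.mp hdx0.hasDerivAt
    have hzero : Filter.Tendsto (slope x 0) (nhdsWithin 0 {(0:ℝ)}ᶜ) (nhds 0) := by
      apply squeeze_zero_norm' (a := fun t : ℝ => |t|)
      · filter_upwards [eventually_nhdsWithin_of_eventually_nhds hbound,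
          self_mem_nhdsWithin] with t ht htne
        have htne' : t ≠ 0 := htne
        rw [slope_def_field, hx0, sub_zero, sub_zero, Real.norm_eq_abs, abs_div]
        rw [div_le_iff₀ (abs_pos.mpr htne')]
        calc |x t| ≤ t ^ 2 := ht
          _ = |t| * |t| := by rw [← abs_mul, ← sq, abs_of_nonneg (sq_nonneg t)]
      · exact (continuous_abs.tendsto' 0 0 (by simp)).mono_left nhdsWithin_le_nhds
    exact tendsto_nhds_unique hs hzero
  -- get an open nbhd with continuous deriv
  obtain ⟨u, hu, hcd⟩ := h.contDiffOn le_rfl (by simp)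
  obtain ⟨v, hvu, hvo, hv0⟩ := mem_nhds_iff.mp hu
  have hcdv : ContDiffOn ℝ 1 x v := hcd.mono hvu
  have hderiv_cont : ContinuousOn (deriv x) v := hcdv.continuousOn_deriv_of_isOpen hvo le_rfl
  have hcont0 : ContinuousAt (deriv x) 0 := hderiv_cont.continuousAt (hvo.mem_nhds hv0)
  have hsmall : ∀ᶠ t in nhds (0:ℝ), |deriv x t| < 1/2 := by
    have h1 : Filter.Tendsto (fun t => |deriv x t|) (nhds 0) (nhds 0) := by
      have := hcont0.tendsto
      rw [hder0] at this
      exact (continuous_abs.tendsto' 0 0 (by simp)).comp this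
    exact h1.eventually_lt_const (by norm_num)
  -- combine and extract δ
  have hall : ∀ᶠ t in nhds (0:ℝ), x t ^ 2 = gg t ∧ t ∈ v ∧ |deriv x t| < 1/2 := by
    filter_upwards [hx, hvo.mem_nhds hv0, hsmall] with t h1 h2 h3
    exact ⟨h1, h2, h3⟩
  obtain ⟨δ, hδ, hball⟩ := Metric.eventually_nhds_iff.mp hall
  -- pick the point t₀ = 1/(π/4 + n*(2π))
  obtain ⟨n, hn⟩ := exists_nat_gt (max (1/δ) 10)
  set θ : ℝ := Real.pi / 4 + n * (2 * Real.pi) with hθdef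
  have hpi := Real.pi_gt_three
  have hcast : (0:ℝ) ≤ (n:ℝ) := n.cast_nonneg
  have hθbig : max (1/δ) 10 < θ := by
    have h2 : (n:ℝ) ≤ (n:ℝ) * (2 * Real.pi) := by nlinarith
    rw [hθdef]
    linarith [Real.pi_pos]
  have hθpos : 0 < θ := by
    rw [hθdef]; positivity
  set t₀ : ℝ := 1/θ with ht0def
  have ht0pos : 0 < t₀ := by positivity
  have ht0ne : t₀ ≠ 0 := ne_of_gt ht0pos
  have hinv : 1 / t₀ = θ := by rw [ht0def, one_div_one_div]
  have ht0small : t₀ < 1/10 := by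
    rw [ht0def]
    rw [div_lt_div_iff₀ hθpos (by norm_num)]
    have := lt_of_le_of_lt (le_max_right (1/δ) 10) hθbig
    linarith
  have ht0δ : t₀ < δ := by
    rw [ht0def]
    have h10 : 1/δ < θ := lt_of_le_of_lt (le_max_left _ _) hθbig
    rw [div_lt_iff₀ hθpos]
    rw [div_lt_iff₀ hδ] at h10
    nlinarith
  -- trig values
  have hsin : Real.sin (1/t₀) = Real.sqrt 2 / 2 := by
    rw [hinv, hθdef, Real.sin_add_nat_mul_two_pi, Real.sin_pi_div_four]
  have hcos : Real.cos (1/t₀) = Real.sqrt 2 / 2 := by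
    rw [hinv, hθdef, Real.cos_add_nat_mul_two_pi, Real.cos_pi_div_four]
  set s : ℝ := Real.sqrt 2 / 2 with hsdef
  have hspos : 0 < s := by
    have := sqrt2_gt; rw [hsdef]; linarith
  -- facts at t₀
  have ht0mem := hball (by simpa [abs_of_pos ht0pos] using ht0δ : dist t₀ 0 < δ)
  obtain ⟨heq, hmem, hd⟩ := ht0mem
  -- x differentiable at t₀
  have hdx : DifferentiableAt ℝ x t₀ :=
    (hcdv.differentiableOn (by norm_num)).differentiableAt (hvo.mem_nhds hmem)
  -- x^2 = gg near t₀
  have hnear : (fun t => x t ^ 2) =ᶠ[nhds t₀] gg := by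
    have : ∀ᶠ t in nhds t₀, dist t 0 < δ := by
      have : Continuous fun t : ℝ => dist t 0 := by continuity
      exact (this.tendsto t₀).eventually_lt_const (by simpa [abs_of_pos ht0pos] using ht0δ)
    filter_upwards [this] with t ht
    exact (hball ht).1
  have hsq : HasDerivAt (fun t => x t ^ 2) (2 * x t₀ ^ 1 * deriv x t₀) t₀ := hdx.hasDerivAt.pow 2
  have hgd : HasDerivAt gg (2 * x t₀ ^ 1 * deriv x t₀) t₀ := hsq.congr_of_eventuallyEq hnear.symm
  have huniq : 2 * x t₀ * deriv x t₀ = gg' t₀ := by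
    have := hgd.unique (hA ht0ne)
    rw [pow_one] at this
    exact this
  -- value of x t₀
  have hval : x t₀ = t₀ ^ 2 * s ∨ x t₀ = -(t₀ ^ 2 * s) := by
    have h1 : x t₀ ^ 2 - (t₀ ^ 2 * s) ^ 2 = 0 := by
      rw [heq]; unfold gg; rw [hsin]; ring
    have h2 : (x t₀ - t₀ ^ 2 * s) * (x t₀ + t₀ ^ 2 * s) = 0 := by nlinarith [h1]
    rcases mul_eq_zero.mp h2 with h | h
    · left; linarith
    · right; linarith
  -- rewrite gg' t₀
  have hgg' : gg' t₀ = 4 * t₀ ^ 3 * s ^ 2 - 2 * t₀ ^ 2 * s * s := by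
    unfold gg'; rw [hsin, hcos]
  have hfacpos : 0 < t₀ ^ 2 * s := mul_pos (pow_pos ht0pos 2) hspos
  have ht2s : t₀ ^ 2 * s ≠ 0 := ne_of_gt hfacpos
  have hfac2 : (2 * (t₀ ^ 2 * s)) ≠ 0 := ne_of_gt (by linarith)
  have habs := abs_lt.mp hd
  have hsval : s ^ 2 = 1/2 := by
    rw [hsdef]
    rw [div_pow, Real.sq_sqrt (by norm_num : (0:ℝ) ≤ 2)]
    norm_num
  clear_value s t₀ θ
  rcases hval with hv | hv
  · -- deriv x t₀ = 2 t₀ s - s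
    have : deriv x t₀ = 2 * t₀ * s - s := by
      have hkey : (2 * (t₀ ^ 2 * s)) * deriv x t₀ = (2 * (t₀ ^ 2 * s)) * (2 * t₀ * s - s) := by
        calc (2 * (t₀ ^ 2 * s)) * deriv x t₀ = 2 * x t₀ * deriv x t₀ := by rw [hv]
          _ = gg' t₀ := huniq
          _ = (2 * (t₀ ^ 2 * s)) * (2 * t₀ * s - s) := by rw [hgg']; ring
      exact mul_left_cancel₀ hfac2 hkey
    rw [this] at habs
    have hsgt : (0.7:ℝ) < s := by rw [hsdef]; linarith [sqrt2_gt]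
    have hts : t₀ * s < s/10 := by nlinarith
    linarith [habs.1]
  · have : deriv x t₀ = -(2 * t₀ * s - s) := by
      have hkey : (2 * (t₀ ^ 2 * s)) * deriv x t₀ = (2 * (t₀ ^ 2 * s)) * -(2 * t₀ * s - s) := by
        calc (2 * (t₀ ^ 2 * s)) * deriv x t₀ = -(2 * x t₀ * deriv x t₀) := by rw [hv]; ring
          _ = -(gg' t₀) := by rw [huniq]
          _ = (2 * (t₀ ^ 2 * s)) * -(2 * t₀ * s - s) := by rw [hgg']; ring
      exact mul_left_cancel₀ hfac2 hkey
    rw [this] at habs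
    have hsgt : (0.7:ℝ) < s := by rw [hsdef]; linarith [sqrt2_gt]
    have hts : t₀ * s < s/10 := by nlinarith
    linarith [habs.2]

lemma hderiv_gg : deriv gg = gg' := by
  funext t
  rcases eq_or_ne t 0 with rfl | ht
  · rw [hB.deriv]
    simp [gg']
  · exact (hA ht).deriv

/-- Example 2.3 (second): `f t = t⁴ sin²(1/t)` (with `f 0 = 0`, using `1/0 = 0`)
is nonnegative and twice differentiable, but any square root of `f` near `0`
fails to be `C¹` at `0`. -/
theorem no_C1_sqrt_of_twice_differentiable :
    (Differentiable ℝ (fun t : ℝ => t ^ 4 * Real.sin (1 / t) ^ 2)) ∧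
    (∀ t : ℝ, DifferentiableAt ℝ (deriv (fun t : ℝ => t ^ 4 * Real.sin (1 / t) ^ 2)) t) ∧
    (∀ t : ℝ, 0 ≤ t ^ 4 * Real.sin (1 / t) ^ 2) ∧
    ∀ x : ℝ → ℝ, (∀ᶠ t in nhds (0 : ℝ), x t ^ 2 = t ^ 4 * Real.sin (1 / t) ^ 2) →
      ¬ ContDiffAt ℝ 1 x 0 := by
  refine ⟨?_, ?_, ?_, ?_⟩
  · intro t
    rcases eq_or_ne t 0 with rfl | ht
    · exact hB.differentiableAt
    · exact (hA ht).differentiableAt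
  · intro t
    show DifferentiableAt ℝ (deriv gg) t
    rw [hderiv_gg]
    rcases eq_or_ne t 0 with rfl | ht
    · exact hC0.differentiableAt
    · exact hC ht
  · intro t
    positivity
  · intro x hx
    exact part4 x hx
end

section
/- There exists a nonnegative smooth function f : ℝ → ℝ such that no function g that is C² on an open interval containing the closure of the zero set accumulation point satisfies g² = f; explicitly, for f(t) = Σₙ hₙ(t−tₙ)·((2n/2ⁿ)(t−tₙ)² + 4^{−n}) with suitable bump functions hₙ and points tₙ converging to a finite limit, any g with g² = f near lim tₙ satisfies g''(tₙ) = ±2n, so g is not C². -/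
open Filter Topology

section Example24



noncomputable def chi (x : ℝ) : ℝ := Real.smoothTransition (2 - 3 * x ^ 2)

lemma chi_contDiff {n : ℕ∞} : ContDiff ℝ n chi :=
  Real.smoothTransition.contDiff.comp (by fun_prop)

lemma chi_nonneg (x : ℝ) : 0 ≤ chi x := Real.smoothTransition.nonneg _

lemma chi_eq_one {x : ℝ} (h : x ^ 2 ≤ 4⁻¹) : chi x = 1 :=
  Real.smoothTransition.one_of_one_le (by nlinarith)

lemma chi_eq_zero {x : ℝ} (h : 1 ≤ x ^ 2) : chi x = 0 :=
  Real.smoothTransition.zero_of_nonpos (by nlinarith)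

lemma chi_compactSupport : HasCompactSupport chi := by
  apply HasCompactSupport.intro (isCompact_Icc (a := (-1:ℝ)) (b := 1))
  intro x hx
  apply chi_eq_zero
  simp only [Set.mem_Icc, not_and_or, not_le] at hx
  rcases hx with h | h <;> nlinarith


noncomputable def SS (n : ℕ) : ℝ := ((n : ℝ) + 2)⁻¹
noncomputable def DD (n : ℕ) : ℝ := (10 * ((n : ℝ) + 2) ^ 3)⁻¹

lemma SS_pos (n : ℕ) : 0 < SS n := by unfold SS; positivity
lemma DD_pos (n : ℕ) : 0 < DD n := by unfold DD; positivity

lemma SS_anti : StrictAnti SS := by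
  intro m n h
  apply inv_strictAnti₀ (by positivity)
  have : (m : ℝ) < n := by exact_mod_cast h
  linarith

lemma DD_anti (m n : ℕ) (h : m ≤ n) : DD n ≤ DD m := by
  unfold DD
  apply inv_anti₀ (by positivity)
  have : (m : ℝ) ≤ n := by exact_mod_cast h
  gcongr <;> linarith

lemma key_sep (p q : ℕ) (hpq : p < q) : DD p + DD q ≤ SS p - SS q := by
  have h1 : SS q ≤ SS (p + 1) := SS_anti.antitone hpq
  have h2 : DD q ≤ DD p := DD_anti p q hpq.le
  have hp2 : (0:ℝ) < (p : ℝ) + 2 := by positivity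
  have h3 : SS p - SS (p + 1) = (((p : ℝ) + 2) * ((p : ℝ) + 3))⁻¹ := by
    unfold SS
    push_cast
    rw [inv_sub_inv (by positivity) (by positivity)]
    rw [show ((p:ℝ) + 1 + 2) - ((p:ℝ) + 2) = 1 by ring, show ((p:ℝ)+2) * ((p:ℝ)+1+2) = ((p:ℝ)+2) * ((p:ℝ)+3) by ring, one_div]
  have h7 : (10 * ((p : ℝ) + 2) ^ 3)⁻¹ ≤ (2 * (((p : ℝ) + 2) * ((p : ℝ) + 3)))⁻¹ :=
    inv_anti₀ (by positivity)
      (by nlinarith [Nat.cast_nonneg (α := ℝ) p, sq_nonneg ((p:ℝ)+2)])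
  have h4 : DD p + DD p ≤ (((p : ℝ) + 2) * ((p : ℝ) + 3))⁻¹ :=
    calc DD p + DD p = 2 * (10 * ((p : ℝ) + 2) ^ 3)⁻¹ := by unfold DD; ring
      _ ≤ 2 * (2 * (((p : ℝ) + 2) * ((p : ℝ) + 3)))⁻¹ := by linarith
      _ = (((p : ℝ) + 2) * ((p : ℝ) + 3))⁻¹ := by
          rw [mul_inv]; ring
  have h5 : SS (p+1) ≤ SS p := SS_anti.antitone (Nat.le_succ p)
  linarith

lemma sep {n m : ℕ} (hnm : n ≠ m) {t : ℝ} (ht : |t - SS n| ≤ DD n / 2) :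
    DD m ≤ |t - SS m| := by
  have hD := DD_pos n
  rw [abs_le] at ht
  rcases lt_or_gt_of_ne hnm with h | h
  · have hk := key_sep n m h
    have : DD m ≤ t - SS m := by linarith
    exact this.trans (le_abs_self _)
  · have hk := key_sep m n h
    have : DD m ≤ SS m - t := by linarith
    calc DD m ≤ SS m - t := this
      _ ≤ |SS m - t| := le_abs_self _
      _ = |t - SS m| := abs_sub_comm _ _


noncomputable def cA (n : ℕ) : ℝ := (4 : ℝ)⁻¹ ^ n
noncomputable def aA (n : ℕ) : ℝ := ((8 : ℝ)⁻¹ ^ n) ^ 2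

lemma cA_pos (n : ℕ) : 0 < cA n := by unfold cA; positivity
lemma aA_pos (n : ℕ) : 0 < aA n := by unfold aA; positivity

noncomputable def Gb (c a : ℝ) (y : ℝ) : ℝ := c • (chi y * y ^ 2) + a • chi y

noncomputable def bump (n : ℕ) (t : ℝ) : ℝ := Gb (cA n) (aA n) ((DD n)⁻¹ * (t + -(SS n)))

noncomputable def ff (t : ℝ) : ℝ := ∑' n, bump n t


lemma bump_nonneg (n : ℕ) (t : ℝ) : 0 ≤ bump n t := by
  unfold bump Gb
  have h1 := chi_nonneg ((DD n)⁻¹ * (t + -(SS n)))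
  have h2 := (cA_pos n).le
  have h3 := (aA_pos n).le
  positivity

lemma ff_nonneg (t : ℝ) : 0 ≤ ff t := tsum_nonneg (fun n => bump_nonneg n t)

lemma bump_eq_zero {m : ℕ} {t : ℝ} (h : DD m ≤ |t - SS m|) : bump m t = 0 := by
  unfold bump Gb
  have hx : 1 ≤ ((DD m)⁻¹ * (t + -(SS m))) ^ 2 := by
    have hD := DD_pos m
    rw [mul_pow]
    rw [show t + -(SS m) = t - SS m by ring]
    have h2 : DD m ^ 2 ≤ |t - SS m| ^ 2 := by
      apply pow_le_pow_left₀ hD.le h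
    rw [sq_abs] at h2
    rw [inv_pow, ← div_eq_inv_mul, le_div_iff₀ (by positivity)]
    linarith
  rw [chi_eq_zero hx]
  simp

lemma ff_eq_near {n : ℕ} {t : ℝ} (h : |t - SS n| ≤ DD n / 2) :
    ff t = cA n * (DD n)⁻¹ ^ 2 * (t - SS n) ^ 2 + aA n := by
  unfold ff
  rw [tsum_eq_single n (fun m hmn => bump_eq_zero (sep (Ne.symm hmn) h))]
  unfold bump Gb
  have hD := DD_pos n
  have hx : ((DD n)⁻¹ * (t + -(SS n))) ^ 2 ≤ 4⁻¹ := by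
    rw [mul_pow, show t + -(SS n) = t - SS n by ring, inv_pow, ← div_eq_inv_mul,
      div_le_iff₀ (by positivity)]
    have h2 : |t - SS n| ^ 2 ≤ (DD n / 2) ^ 2 := by
      apply pow_le_pow_left₀ (abs_nonneg _) h
    rw [sq_abs] at h2
    nlinarith
  rw [chi_eq_one hx]
  simp only [smul_eq_mul]
  ring


lemma G2_contDiff {n : ℕ∞} : ContDiff ℝ n (fun y : ℝ => chi y * y ^ 2) :=
  chi_contDiff.mul (contDiff_id.pow 2)

lemma G2_compactSupport : HasCompactSupport (fun y : ℝ => chi y * y ^ 2) := by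
  apply chi_compactSupport.mono
  intro x hx
  contrapose! hx
  simp only [Function.mem_support, ne_eq, not_not] at hx ⊢
  rw [hx]; ring

lemma Gb_contDiff (c a : ℝ) {n : ℕ∞} : ContDiff ℝ n (Gb c a) :=
  (G2_contDiff.const_smul c).add (chi_contDiff.const_smul a)

lemma exists_bound (k : ℕ) : ∃ M : ℝ, 0 ≤ M ∧ ∀ x : ℝ,
    ‖iteratedFDeriv ℝ k (fun y : ℝ => chi y * y ^ 2) x‖ ≤ M ∧
    ‖iteratedFDeriv ℝ k chi x‖ ≤ M := by
  obtain ⟨M1, hM1⟩ := (G2_compactSupport.iteratedFDeriv k).exists_bound_of_continuous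
    ((G2_contDiff (n := (⊤ : ℕ∞))).continuous_iteratedFDeriv (by exact_mod_cast le_top))
  obtain ⟨M2, hM2⟩ := (chi_compactSupport.iteratedFDeriv k).exists_bound_of_continuous
    ((chi_contDiff (n := (⊤ : ℕ∞))).continuous_iteratedFDeriv (by exact_mod_cast le_top))
  refine ⟨max (max M1 M2) 0, le_max_right _ _, fun x => ⟨?_, ?_⟩⟩
  · exact (hM1 x).trans ((le_max_left _ _).trans (le_max_left _ _))
  · exact (hM2 x).trans ((le_max_right _ _).trans (le_max_left _ _))

noncomputable def Mb (k : ℕ) : ℝ := (exists_bound k).choose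

lemma Mb_nonneg (k : ℕ) : 0 ≤ Mb k := (exists_bound k).choose_spec.1

lemma Mb_spec (k : ℕ) (x : ℝ) :
    ‖iteratedFDeriv ℝ k (fun y : ℝ => chi y * y ^ 2) x‖ ≤ Mb k ∧
    ‖iteratedFDeriv ℝ k chi x‖ ≤ Mb k := (exists_bound k).choose_spec.2 x

lemma norm_smul_iFD (c : ℝ) (k : ℕ) (f : ℝ → ℝ) (x : ℝ) :
    ‖c • iteratedFDeriv ℝ k f x‖ = ‖c‖ * ‖iteratedFDeriv ℝ k f x‖ :=
  norm_smul c _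

lemma bump_bound (k : ℕ) (n : ℕ) (x : ℝ) :
    ‖iteratedFDeriv ℝ k (bump n) x‖ ≤ (DD n)⁻¹ ^ k * ((cA n + aA n) * Mb k) := by
  have hD := DD_pos n
  rw [norm_iteratedFDeriv_eq_norm_iteratedDeriv]
  have e1 : iteratedDeriv k (bump n) x
      = iteratedDeriv k (fun z => Gb (cA n) (aA n) ((DD n)⁻¹ * z)) (x + -(SS n)) := by
    exact congrFun (iteratedDeriv_comp_add_const k
      (fun w => Gb (cA n) (aA n) ((DD n)⁻¹ * w)) (-(SS n))) x
  have e2 : iteratedDeriv k (fun z => Gb (cA n) (aA n) ((DD n)⁻¹ * z)) (x + -(SS n))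
      = (DD n)⁻¹ ^ k * iteratedDeriv k (Gb (cA n) (aA n)) ((DD n)⁻¹ * (x + -(SS n))) := by
    rw [iteratedDeriv_comp_const_mul (Gb_contDiff _ _ (n := (k : ℕ∞))) ((DD n)⁻¹)]
  rw [e1, e2]
  set y := (DD n)⁻¹ * (x + -(SS n))
  rw [norm_mul]
  have e3 : ‖iteratedDeriv k (Gb (cA n) (aA n)) y‖ ≤ (cA n + aA n) * Mb k := by
    rw [← norm_iteratedFDeriv_eq_norm_iteratedDeriv]
    have e4 : iteratedFDeriv ℝ k (Gb (cA n) (aA n)) y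
        = cA n • iteratedFDeriv ℝ k (fun y : ℝ => chi y * y ^ 2) y
          + aA n • iteratedFDeriv ℝ k chi y := by
      rw [show Gb (cA n) (aA n)
          = (fun w => cA n • (fun y : ℝ => chi y * y ^ 2) w + aA n • chi w) from rfl]
      rw [iteratedFDeriv_add_apply' ((G2_contDiff (n := (k:ℕ∞))).const_smul _).contDiffAt
        ((chi_contDiff (n := (k:ℕ∞))).const_smul _).contDiffAt]
      rw [iteratedFDeriv_const_smul_apply' (G2_contDiff (n := (k:ℕ∞))).contDiffAt,
        iteratedFDeriv_const_smul_apply' (chi_contDiff (n := (k:ℕ∞))).contDiffAt]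
    rw [e4]
    calc ‖_ + _‖ ≤ ‖cA n • iteratedFDeriv ℝ k (fun y : ℝ => chi y * y ^ 2) y‖
        + ‖aA n • iteratedFDeriv ℝ k chi y‖ := norm_add_le _ _
      _ ≤ cA n * Mb k + aA n * Mb k := by
          rw [norm_smul_iFD, norm_smul_iFD, Real.norm_eq_abs, Real.norm_eq_abs,
            abs_of_pos (cA_pos n), abs_of_pos (aA_pos n)]
          exact add_le_add (mul_le_mul_of_nonneg_left (Mb_spec k y).1 (cA_pos n).le)
            (mul_le_mul_of_nonneg_left (Mb_spec k y).2 (aA_pos n).le)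
      _ = (cA n + aA n) * Mb k := by ring
  calc ‖(DD n)⁻¹ ^ k‖ * ‖iteratedDeriv k (Gb (cA n) (aA n)) y‖
      = (DD n)⁻¹ ^ k * ‖iteratedDeriv k (Gb (cA n) (aA n)) y‖ := by
        rw [Real.norm_eq_abs, abs_of_pos (by positivity)]
    _ ≤ (DD n)⁻¹ ^ k * ((cA n + aA n) * Mb k) := by
        exact mul_le_mul_of_nonneg_left e3 (by positivity)

lemma DD_inv (n : ℕ) : (DD n)⁻¹ = 10 * ((n : ℝ) + 2) ^ 3 := by
  unfold DD; rw [inv_inv]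

lemma summable_base (k : ℕ) : Summable (fun n : ℕ => ((n : ℝ) + 2) ^ k * (4 : ℝ)⁻¹ ^ n) := by
  have h : Summable (fun n : ℕ => (n : ℝ) ^ k * (4 : ℝ)⁻¹ ^ n) :=
    summable_pow_mul_geometric_of_norm_lt_one k (by rw [norm_inv]; norm_num)
  have h2 := (summable_nat_add_iff 2).2 h
  have h3 := h2.mul_left (16 : ℝ)
  apply h3.congr
  intro n
  push_cast
  rw [pow_add]
  norm_num
  ring

lemma summable_v (k : ℕ) :
    Summable (fun n : ℕ => (DD n)⁻¹ ^ k * ((cA n + aA n) * Mb k)) := by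
  apply Summable.of_nonneg_of_le
    (f := fun n : ℕ => (2 * 10 ^ k * Mb k) * (((n : ℝ) + 2) ^ (3 * k) * (4 : ℝ)⁻¹ ^ n))
  · intro n
    have := DD_pos n
    have := cA_pos n
    have := aA_pos n
    have := Mb_nonneg k
    positivity
  · intro n
    rw [DD_inv]
    have haA : aA n ≤ cA n := by
      unfold aA cA
      rw [← pow_mul, mul_comm, pow_mul]
      apply pow_le_pow_left₀ (by norm_num) (by norm_num)
    have hcA : cA n = (4 : ℝ)⁻¹ ^ n := rfl
    have h1 : (10 * ((n : ℝ) + 2) ^ 3) ^ k = 10 ^ k * ((n : ℝ) + 2) ^ (3 * k) := by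
      rw [mul_pow, ← pow_mul]
    rw [h1]
    have h2 : cA n + aA n ≤ 2 * (4 : ℝ)⁻¹ ^ n := by rw [hcA] at haA ⊢; linarith
    have hb : (0:ℝ) ≤ ((n : ℝ) + 2) ^ (3 * k) := by positivity
    have hM := Mb_nonneg k
    calc 10 ^ k * ((n : ℝ) + 2) ^ (3 * k) * ((cA n + aA n) * Mb k)
        ≤ 10 ^ k * ((n : ℝ) + 2) ^ (3 * k) * ((2 * (4 : ℝ)⁻¹ ^ n) * Mb k) := by
          apply mul_le_mul_of_nonneg_left _ (by positivity)
          exact mul_le_mul_of_nonneg_right h2 hM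
      _ = 2 * 10 ^ k * Mb k * (((n : ℝ) + 2) ^ (3 * k) * (4 : ℝ)⁻¹ ^ n) := by ring
  · exact (summable_base (3 * k)).mul_left _

lemma ff_contDiff : ContDiff ℝ (⊤ : ℕ∞) ff := by
  apply contDiff_tsum
  · intro n
    exact (Gb_contDiff _ _).comp (by fun_prop)
  · intro k _
    exact summable_v k
  · intro k n x _
    exact bump_bound k n x


lemma SS_tendsto : Tendsto SS atTop (𝓝 0) := by
  unfold SS
  apply Tendsto.comp tendsto_inv_atTop_zero
  apply tendsto_atTop_add_const_right
  exact tendsto_natCast_atTop_atTop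

lemma DD_tendsto : Tendsto DD atTop (𝓝 0) := by
  unfold DD
  apply Tendsto.comp tendsto_inv_atTop_zero
  apply Tendsto.const_mul_atTop (by norm_num)
  apply tendsto_atTop_mono (fun n => ?_) tendsto_natCast_atTop_atTop
  have hx : (0:ℝ) ≤ (n : ℝ) := Nat.cast_nonneg n
  nlinarith [hx, sq_nonneg ((n:ℝ)), pow_nonneg hx 3]

/-- Example 2.4: there exists a nonnegative smooth function `f : ℝ → ℝ` and a
point `t₀` such that no function `g` with `g² = f` near `t₀` is `C²` at `t₀`. -/
theorem exists_smooth_nonneg_no_C2_sqrt :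
    ∃ (f : ℝ → ℝ) (t₀ : ℝ),
      ContDiff ℝ (⊤ : ℕ∞) f ∧ (∀ t, 0 ≤ f t) ∧
      ∀ g : ℝ → ℝ, (∀ᶠ t in nhds t₀, g t ^ 2 = f t) → ¬ ContDiffAt ℝ 2 g t₀ := by
  refine ⟨ff, 0, ff_contDiff, ff_nonneg, ?_⟩
  intro g hg hC2
  obtain ⟨u, hu, hgu⟩ := hC2.contDiffOn le_rfl (by simp)
  obtain ⟨ρ, hρ, hball⟩ := Metric.mem_nhds_iff.1 hu
  set v := Metric.ball (0 : ℝ) ρ with hv_def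
  have hvo : IsOpen v := Metric.isOpen_ball
  have h0v : (0 : ℝ) ∈ v := Metric.mem_ball_self hρ
  have hv : ContDiffOn ℝ 2 g v := hgu.mono hball
  rw [show (2 : WithTop ℕ∞) = 1 + 1 from by norm_num] at hv
  obtain ⟨hdg, -, hv1⟩ := (contDiffOn_succ_iff_deriv_of_isOpen hvo).1 hv
  rw [show (1 : WithTop ℕ∞) = 0 + 1 from by norm_num] at hv1
  obtain ⟨hdg2, -, hv0⟩ := (contDiffOn_succ_iff_deriv_of_isOpen hvo).1 hv1
  have hcont : ContinuousAt (deriv (deriv g)) 0 :=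
    hv0.continuousOn.continuousAt (hvo.mem_nhds h0v)
  obtain ⟨ε, hε, hgf⟩ := Metric.eventually_nhds_iff.1 hg
  -- the key computation
  have key : ∀ n : ℕ, SS n + DD n < min ε ρ →
      (2 : ℝ) ^ n ≤ |deriv (deriv g) (SS n)| := by
    intro n hn
    have hD := DD_pos n
    have hS := SS_pos n
    set s := SS n with hs_def
    set A := cA n * (DD n)⁻¹ ^ 2 with hA_def
    have hA : (0 : ℝ) < A := by rw [hA_def]; unfold cA; positivity
    have haA : (0 : ℝ) < aA n := by unfold aA; positivity
    have hin : ∀ y : ℝ, dist y s < DD n / 2 → |y| < min ε ρ := by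
      intro y hy
      rw [Real.dist_eq] at hy
      have : |y| ≤ |y - s| + |s| := by
        calc |y| = |(y - s) + s| := by ring_nf
          _ ≤ |y - s| + |s| := abs_add_le _ _
      rw [abs_of_pos hS] at this
      linarith
    have hsv : s ∈ v := by
      rw [hv_def, Metric.mem_ball, Real.dist_eq, sub_zero, abs_of_pos hS]
      have := lt_of_le_of_lt (le_add_of_nonneg_right hD.le) hn
      exact this.trans_le (min_le_right _ _)
    have E : (fun t => g t ^ 2) =ᶠ[𝓝 s] fun t => A * (t - s) ^ 2 + aA n := by
      apply Metric.eventually_nhds_iff.2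
      refine ⟨DD n / 2, by positivity, fun {y} hy => ?_⟩
      have h1 : dist y 0 < ε := by
        rw [Real.dist_eq, sub_zero]
        exact (hin y hy).trans_le (min_le_left _ _)
      have h2 : |y - s| ≤ DD n / 2 := by
        rw [Real.dist_eq] at hy; exact hy.le
      show g y ^ 2 = A * (y - s) ^ 2 + aA n
      rw [hgf h1, ff_eq_near h2, hA_def]
    have hvmem : ∀ᶠ t in 𝓝 s, t ∈ v := hvo.mem_nhds hsv
    have hgdiff : ∀ᶠ t in 𝓝 s, DifferentiableAt ℝ g t := by
      filter_upwards [hvmem] with t ht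
      exact (hdg t ht).differentiableAt (hvo.mem_nhds ht)
    have hgs2 : g s ^ 2 = aA n := by
      have := E.self_of_nhds
      simpa using this
    have hgs : g s ≠ 0 := by
      intro h
      rw [h] at hgs2
      simp at hgs2
      exact haA.ne' hgs2.symm
    have E2 : (fun t => 2 * g t * deriv g t) =ᶠ[𝓝 s] fun t => A * (2 * (t - s)) := by
      have hEd := E.deriv
      filter_upwards [hEd, hgdiff] with t h1 h2
      have hL : deriv (fun w => g w ^ 2) t = 2 * g t * deriv g t := by
        have := (h2.hasDerivAt.pow 2).deriv
        rw [show (fun w => g w ^ 2) = g ^ 2 from rfl, this, show (2:ℕ) - 1 = 1 from rfl]; push_cast; ring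
      have hR : deriv (fun w => A * (w - s) ^ 2 + aA n) t = A * (2 * (t - s)) := by
        have h : HasDerivAt (fun w => A * (w - s) ^ 2 + aA n)
            (A * (2 * (t - s) ^ 1 * 1)) t :=
          ((((hasDerivAt_id t).sub_const s).pow 2).const_mul A).add_const (aA n)
        rw [h.deriv]; ring
      rw [← hL, h1, hR]
    have hg's : deriv g s = 0 := by
      have := E2.self_of_nhds
      simp only [sub_self, mul_zero] at this
      rcases mul_eq_zero.1 this with h | h
      · rcases mul_eq_zero.1 h with h' | h'
        · norm_num at h'
        · exact absurd h' hgs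
      · exact h
    have hgds : DifferentiableAt ℝ g s := (hdg s hsv).differentiableAt (hvo.mem_nhds hsv)
    have hdg2s : DifferentiableAt ℝ (deriv g) s :=
      (hdg2 s hsv).differentiableAt (hvo.mem_nhds hsv)
    have hL : HasDerivAt (fun t => 2 * g t * deriv g t)
        (2 * deriv g s * deriv g s + 2 * g s * deriv (deriv g) s) s :=
      (hgds.hasDerivAt.const_mul 2).mul hdg2s.hasDerivAt
    have hR : HasDerivAt (fun t => A * (2 * (t - s))) (A * 2) s := by
      have h : HasDerivAt (fun t => (A * 2) * (t - s)) ((A * 2) * 1) s :=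
        ((hasDerivAt_id s).sub_const s).const_mul (A * 2)
      have h2 : (fun t => (A * 2) * (t - s)) = (fun t => A * (2 * (t - s))) := by
        funext t; ring
      rw [h2, mul_one] at h
      exact h
    have huniq : 2 * deriv g s * deriv g s + 2 * g s * deriv (deriv g) s = A * 2 :=
      hL.unique (hR.congr_of_eventuallyEq E2)
    rw [hg's] at huniq
    have hprod : g s * deriv (deriv g) s = A := by linarith
    have habs : |g s| = (8 : ℝ)⁻¹ ^ n := by
      rw [← Real.sqrt_sq_eq_abs, hgs2]
      unfold aA
      exact Real.sqrt_sq (by positivity)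
    have habs2 : |g s| * |deriv (deriv g) s| = A := by
      rw [← abs_mul, hprod, abs_of_pos hA]
    have h8 : (0 : ℝ) < (8 : ℝ)⁻¹ ^ n := by positivity
    have hval : |deriv (deriv g) s| = A * 8 ^ n := by
      rw [habs] at habs2
      field_simp at habs2 ⊢
      rw [← habs2, div_pow, one_pow]; field_simp
    rw [hval, hA_def, DD_inv]
    calc (2 : ℝ) ^ n = (4 : ℝ)⁻¹ ^ n * 8 ^ n := by
          rw [← mul_pow]; norm_num
      _ ≤ cA n * (10 * ((n : ℝ) + 2) ^ 3) ^ 2 * 8 ^ n := by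
          have hx : (0:ℝ) ≤ (n : ℝ) := Nat.cast_nonneg n
          have hc : (8:ℝ) ≤ ((n : ℝ) + 2) ^ 3 := by nlinarith [hx, sq_nonneg ((n:ℝ))]
          have h1 : (1 : ℝ) ≤ (10 * ((n : ℝ) + 2) ^ 3) ^ 2 := by nlinarith [hc]
          have h3 : cA n = (4 : ℝ)⁻¹ ^ n := rfl
          calc (4 : ℝ)⁻¹ ^ n * 8 ^ n = (4 : ℝ)⁻¹ ^ n * 1 * 8 ^ n := by ring
            _ ≤ cA n * (10 * ((n : ℝ) + 2) ^ 3) ^ 2 * 8 ^ n := by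
                rw [h3]
                gcongr
  -- conclude a contradiction
  have hb : Tendsto (fun n => |deriv (deriv g) (SS n)|) atTop
      (𝓝 |deriv (deriv g) 0|) := ((hcont.tendsto.comp SS_tendsto).abs)
  have hev1 : ∀ᶠ n : ℕ in atTop, SS n + DD n < min ε ρ := by
    have := (SS_tendsto.add DD_tendsto)
    rw [add_zero] at this
    exact this.eventually_lt_const (by positivity)
  have hev2 : ∀ᶠ n : ℕ in atTop,
      |deriv (deriv g) (SS n)| ≤ |deriv (deriv g) 0| + 1 :=
    hb.eventually_le_const (by linarith [abs_nonneg (deriv (deriv g) 0)])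
  have hev3 : ∀ᶠ n : ℕ in atTop, |deriv (deriv g) 0| + 1 < (2 : ℝ) ^ n :=
    (tendsto_pow_atTop_atTop_of_one_lt (by norm_num : (1:ℝ) < 2)).eventually_gt_atTop _
  obtain ⟨n, h1, h2, h3⟩ := (hev1.and (hev2.and hev3)).exists
  have := key n h1
  linarith


end Example24
end

section
/- For n real numbers x₁,…,xₙ, the determinant of the k×k Bezoutiant minor B_k = (s_{i+j})_{0≤i,j<k}, where s_m = Σⱼ xⱼ^m are the power sums, equals Σ_{i₁<…<i_k} ∏_{a<b} (x_{i_a} − x_{i_b})². -/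
open Finset

open Matrix Equiv in
private lemma cb_expand {k n : ℕ} (A : Matrix (Fin k) (Fin n) ℝ) :
    (A * Aᵀ).det = ∑ p : Fin k → Fin n,
      (∏ i, A i (p i)) * (Matrix.of fun i j : Fin k => A i (p j)).det := by
  have h1 : (A * Aᵀ).det
      = ∑ p : Fin k → Fin n, ∑ σ : Equiv.Perm (Fin k),
          ((Equiv.Perm.sign σ : ℤ) : ℝ) * ∏ i, A (σ i) (p i) * A i (p i) := by
    simp only [det_apply', mul_apply, transpose_apply, prod_univ_sum, mul_sum,
      Fintype.piFinset_univ]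
    rw [Finset.sum_comm]
  rw [h1]
  refine Finset.sum_congr rfl fun p _ => ?_
  rw [det_apply', Finset.mul_sum]
  refine Finset.sum_congr rfl fun σ _ => ?_
  simp only [of_apply]
  rw [Finset.prod_mul_distrib]
  ring

/-- The determinant of the `k × k` Bezoutiant minor `B_k = (s_{i+j})_{0 ≤ i,j < k}`,
where `s_m = Σⱼ xⱼ^m`, equals the sum over `k`-element subsets of the squared
Vandermonde products of the corresponding roots. -/
theorem det_bezoutiant_minor (n k : ℕ) (x : Fin n → ℝ) (hk : k ≤ n) :
    Matrix.det (Matrix.of fun i j : Fin k => ∑ l : Fin n, x l ^ ((i : ℕ) + (j : ℕ))) =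
      ∑ S ∈ Finset.powersetCard k (Finset.univ : Finset (Fin n)),
        ∏ p ∈ S.offDiag.filter (fun p => p.1 < p.2), (x p.1 - x p.2) ^ 2 := by
  classical
  set A : Matrix (Fin k) (Fin n) ℝ := Matrix.of fun (i : Fin k) (l : Fin n) => x l ^ (i : ℕ)
    with hA
  have hM : (Matrix.of fun i j : Fin k => ∑ l : Fin n, x l ^ ((i : ℕ) + (j : ℕ))) = A * A.transpose := by
    ext i j
    simp [hA, Matrix.mul_apply, pow_add]
  rw [hM, cb_expand A]
  set D : (Fin k → Fin n) → ℝ := fun p => (Matrix.of fun i j : Fin k => A i (p j)).det with hD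
  rw [← Finset.sum_filter_add_sum_filter_not Finset.univ (fun p => Function.Injective p)]
  have hzero : ∑ p ∈ univ.filter (fun p : Fin k → Fin n => ¬ Function.Injective p),
      (∏ i, A i (p i)) * D p = 0 := by
    refine Finset.sum_eq_zero fun p hp => ?_
    replace hp := (Finset.mem_filter.mp hp).2
    simp only [Function.Injective] at hp
    push_neg at hp
    obtain ⟨a, b, hab, hne⟩ := hp
    have : D p = 0 := Matrix.det_zero_of_column_eq hne (fun i => by simp [hD, hab])
    rw [this, mul_zero]
  rw [hzero, add_zero]
  have hmaps : ∀ p ∈ univ.filter (fun p : Fin k → Fin n => Function.Injective p),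
      Finset.image p univ ∈ powersetCard k (univ : Finset (Fin n)) := by
    intro p hp
    simp only [mem_filter] at hp
    rw [Finset.mem_powersetCard]
    exact ⟨Finset.subset_univ _, by
      rw [Finset.card_image_of_injective _ hp.2, card_univ, Fintype.card_fin]⟩
  rw [← Finset.sum_fiberwise_of_maps_to hmaps]
  refine Finset.sum_congr rfl fun S hS => ?_
  rw [Finset.mem_powersetCard] at hS
  have hcard : S.card = k := hS.2
  set g : Fin k → Fin n := ⇑(S.orderEmbOfFin hcard) with hg
  have hginj : Function.Injective g := (S.orderEmbOfFin hcard).injective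
  have hgmem : ∀ i, g i ∈ S := fun i => S.orderEmbOfFin_mem hcard i
  have hgmono : StrictMono g := (S.orderEmbOfFin hcard).strictMono
  have hgimage : Finset.image g univ = S := by
    apply Finset.coe_injective
    rw [Finset.coe_image, Finset.coe_univ, Set.image_univ]
    exact S.range_orderEmbOfFin hcard
  have hgsurj : ∀ a ∈ S, ∃ i, g i = a := by
    intro a ha
    have := (S.range_orderEmbOfFin hcard).symm ▸ (Finset.mem_coe.2 ha)
    exact this
  -- reindex the fiber sum by permutations
  have hstep : ∑ p ∈ (univ.filter (fun p : Fin k → Fin n => Function.Injective p)).filter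
        (fun p => Finset.image p univ = S), (∏ i, A i (p i)) * D p
      = ∑ σ : Equiv.Perm (Fin k), (∏ i, A i (g (σ i))) * D (g ∘ σ) := by
    symm
    refine Finset.sum_bij (fun σ _ => g ∘ σ) ?_ ?_ ?_ ?_
    · intro σ _
      simp only [Finset.mem_filter, Finset.mem_univ, true_and]
      constructor
      · exact hginj.comp σ.injective
      · rw [show Finset.image (g ∘ σ) univ = Finset.image g (Finset.image σ univ) from
          (Finset.image_image).symm, Finset.image_univ_equiv, hgimage]
    · intro σ _ τ _ h
      exact Equiv.ext fun i => hginj (congrFun h i)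
    · intro p hp
      simp only [Finset.mem_filter, Finset.mem_univ, true_and] at hp
      obtain ⟨hpinj, hpim⟩ := hp
      have hpm : ∀ i, p i ∈ S := fun i => hpim ▸ Finset.mem_image_of_mem p (mem_univ i)
      set σ₀ : Fin k → Fin k := fun i => (S.orderIsoOfFin hcard).symm ⟨p i, hpm i⟩ with hσ₀
      have hσinj : Function.Injective σ₀ := by
        intro a b hab
        apply hpinj
        have := congrArg (fun z => ((S.orderIsoOfFin hcard) z : Fin n)) hab
        simpa [hσ₀] using this
      refine ⟨Equiv.ofBijective σ₀ (Finite.injective_iff_bijective.mp hσinj), mem_univ _, ?_⟩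
      funext i
      show g (σ₀ i) = p i
      have : g (σ₀ i) = ((S.orderIsoOfFin hcard) (σ₀ i) : Fin n) :=
        (S.coe_orderIsoOfFin_apply hcard _).symm
      rw [this, hσ₀]
      simp
    · intro σ _
      rfl
  rw [hstep]
  -- compute the permutation sum
  have hperm : ∀ σ : Equiv.Perm (Fin k),
      D (g ∘ σ) = ((Equiv.Perm.sign σ : ℤ) : ℝ) * D g := by
    intro σ
    have : (Matrix.of fun i j : Fin k => A i ((g ∘ σ) j))
        = (Matrix.of fun i j : Fin k => A i (g j)).submatrix id σ := by
      ext i j; rfl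
    rw [hD]
    show (Matrix.of fun i j : Fin k => A i ((g ∘ σ) j)).det = _
    rw [this, Matrix.det_permute']
  have hsum : ∑ σ : Equiv.Perm (Fin k), (∏ i, A i (g (σ i))) * D (g ∘ σ) = D g * D g := by
    have h2 : ∑ σ : Equiv.Perm (Fin k),
        ((Equiv.Perm.sign σ : ℤ) : ℝ) * ∏ i, A i (g (σ i)) = D g := by
      have ht : D g = (Matrix.of fun i j : Fin k => A j (g i)).det := by
        rw [hD, ← Matrix.det_transpose]
        congr 1
      rw [ht, Matrix.det_apply']
      rfl
    calc ∑ σ : Equiv.Perm (Fin k), (∏ i, A i (g (σ i))) * D (g ∘ σ)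
        = ∑ σ : Equiv.Perm (Fin k),
            (((Equiv.Perm.sign σ : ℤ) : ℝ) * ∏ i, A i (g (σ i))) * D g := by
          refine Finset.sum_congr rfl fun σ _ => ?_
          rw [hperm σ]; ring
      _ = (∑ σ : Equiv.Perm (Fin k),
            ((Equiv.Perm.sign σ : ℤ) : ℝ) * ∏ i, A i (g (σ i))) * D g := by
          rw [← Finset.sum_mul]
      _ = D g * D g := by rw [h2]
  rw [hsum]
  -- Vandermonde evaluation
  have hvdm : D g = ∏ i : Fin k, ∏ j ∈ Ioi i, (x (g j) - x (g i)) := by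
    have : (Matrix.of fun i j : Fin k => A i (g j)) = (Matrix.vandermonde (x ∘ g)).transpose := by
      ext i j
      simp [hA, Matrix.vandermonde]
    rw [hD]
    show (Matrix.of fun i j : Fin k => A i (g j)).det = _
    rw [this, Matrix.det_transpose, Matrix.det_vandermonde]
    rfl
  rw [hvdm, ← Finset.prod_mul_distrib]
  have : ∀ i : Fin k, (∏ j ∈ Ioi i, (x (g j) - x (g i))) * (∏ j ∈ Ioi i, (x (g j) - x (g i)))
      = ∏ j ∈ Ioi i, (x (g j) - x (g i)) ^ 2 := by
    intro i
    rw [← Finset.prod_mul_distrib]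
    exact Finset.prod_congr rfl fun j _ => (sq _).symm
  rw [Finset.prod_congr rfl fun i _ => this i]
  rw [Finset.prod_sigma']
  -- reindex the product over pairs
  refine Finset.prod_bij (fun p _ => ((g p.1, g p.2) : Fin n × Fin n)) ?_ ?_ ?_ ?_
  · rintro ⟨i, j⟩ hij
    simp only [Finset.mem_sigma, Finset.mem_univ, true_and, Finset.mem_Ioi] at hij
    simp only [Finset.mem_filter, Finset.mem_offDiag]
    exact ⟨⟨hgmem i, hgmem j, fun h => (ne_of_lt hij) (hginj h)⟩, hgmono hij⟩
  · rintro ⟨i, j⟩ _ ⟨i', j'⟩ _ h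
    simp only [Prod.mk.injEq] at h
    have h1 := hginj h.1
    have h2 := hginj h.2
    subst h1; subst h2; rfl
  · rintro ⟨a, b⟩ hab
    simp only [Finset.mem_filter, Finset.mem_offDiag] at hab
    obtain ⟨⟨ha, hb, _⟩, hlt⟩ := hab
    obtain ⟨i, hi⟩ := hgsurj a ha
    obtain ⟨j, hj⟩ := hgsurj b hb
    refine ⟨⟨i, j⟩, ?_, by simp [hi, hj]⟩
    simp only [Finset.mem_sigma, Finset.mem_univ, true_and, Finset.mem_Ioi]
    rw [← hgmono.lt_iff_lt, hi, hj]
    exact hlt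
  · rintro ⟨i, j⟩ _
    ring
end

section
/- A monic real polynomial P of degree n has all roots real if and only if the Bezoutiant matrix B(P) = (s_{i+j}(P))_{0≤i,j<n}, whose entries are the power sums of the roots expressed in the coefficients, is positive semidefinite. -/
open Polynomial Complex

private lemma msum_fsum {α γ M : Type*} [AddCommMonoid M] (R : Multiset γ) (s : Finset α)
    (f : α → γ → M) :
    (R.map fun w => ∑ i ∈ s, f i w).sum = ∑ i ∈ s, (R.map (f i)).sum := by
  induction R using Multiset.induction with
  | empty => simp
  | cons a t ih => simp [ih, Finset.sum_add_distrib]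

private lemma re_msum (R : Multiset ℂ) (f : ℂ → ℂ) :
    ((R.map f).sum).re = (R.map fun w => (f w).re).sum := by
  have := map_multiset_sum Complex.reAddGroupHom (R.map f)
  simpa [Multiset.map_map, Function.comp] using this

private lemma form_eq (n : ℕ) (R : Multiset ℂ) (x : Fin n → ℝ) :
    dotProduct (star x) (Matrix.mulVec (Matrix.of fun i j : Fin n =>
        ((R.map (fun z => z ^ ((i:ℕ)+(j:ℕ)))).sum).re) x)
      = ((R.map fun w => (∑ i : Fin n, (x i : ℂ) * w ^ (i:ℕ)) ^ 2).sum).re := by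
  have key : (R.map fun w => (∑ i : Fin n, (x i : ℂ) * w ^ (i:ℕ)) ^ 2).sum
      = ∑ i : Fin n, ∑ j : Fin n,
          ((x i * x j : ℝ) : ℂ) * (R.map (fun z => z ^ ((i:ℕ)+(j:ℕ)))).sum := by
    have hw : ∀ w : ℂ, (∑ i : Fin n, (x i : ℂ) * w ^ (i:ℕ)) ^ 2
        = ∑ i : Fin n, ∑ j : Fin n, ((x i * x j : ℝ) : ℂ) * w ^ ((i:ℕ)+(j:ℕ)) := by
      intro w
      rw [sq, Finset.sum_mul_sum]
      refine Finset.sum_congr rfl fun i _ => Finset.sum_congr rfl fun j _ => ?_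
      push_cast
      ring
    rw [Multiset.map_congr rfl fun w _ => hw w, msum_fsum]
    refine Finset.sum_congr rfl fun i _ => ?_
    rw [msum_fsum]
    refine Finset.sum_congr rfl fun j _ => ?_
    rw [Multiset.sum_map_mul_left]
  rw [key, Complex.re_sum]
  simp only [Complex.re_sum, Complex.re_ofReal_mul]
  simp only [star_trivial, dotProduct, Matrix.mulVec, Matrix.of_apply,
    dotProduct, Finset.mul_sum]
  refine Finset.sum_congr rfl fun i _ => Finset.sum_congr rfl fun j _ => ?_
  ring

/-- Sylvester's theorem: a monic real polynomial of degree `n` has all roots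
real if and only if its Bezoutiant matrix `(s_{i+j})_{0 ≤ i,j < n}`, built from
the power sums of its complex roots, is positive semidefinite. (The power sums
of the roots of a real polynomial are real, so we take real parts.) -/
theorem roots_real_iff_bezoutiant_posSemidef (n : ℕ) (hn : 0 < n)
    (P : Polynomial ℝ) (hP : P.Monic) (hdeg : P.natDegree = n) :
    (∀ z ∈ (P.map (algebraMap ℝ ℂ)).roots, z.im = 0) ↔
      (Matrix.of fun i j : Fin n =>
        (((P.map (algebraMap ℝ ℂ)).roots.map
          (fun z => z ^ ((i : ℕ) + (j : ℕ)))).sum).re).PosSemidef := by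
  set Q : ℂ[X] := P.map (algebraMap ℝ ℂ) with hQ
  set R : Multiset ℂ := Q.roots with hR
  constructor
  · -- all roots real → PSD
    intro hreal
    refine Matrix.posSemidef_iff_dotProduct_mulVec.mpr ⟨?_, ?_⟩
    · -- Hermitian
      ext i j
      simp only [Matrix.conjTranspose_apply, Matrix.of_apply, star_trivial]
      rw [add_comm (j:ℕ) (i:ℕ)]
    · intro x
      rw [form_eq, re_msum]
      refine Multiset.sum_nonneg ?_
      intro t ht
      rw [Multiset.mem_map] at ht
      obtain ⟨w, hwR, rfl⟩ := ht
      have hw : (w.re : ℂ) = w := Complex.conj_eq_iff_re.mp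
        (Complex.conj_eq_iff_im.mpr (hreal w hwR))
      have : (∑ i : Fin n, (x i : ℂ) * w ^ (i:ℕ))
          = ((∑ i : Fin n, x i * w.re ^ (i:ℕ) : ℝ) : ℂ) := by
        rw [← hw]; push_cast; rfl
      rw [this, ← Complex.ofReal_pow, Complex.ofReal_re]
      positivity
  · -- PSD → all roots real
    intro hpsd z hzR
    by_contra hzim
    have hQ0 : Q ≠ 0 := (hP.map _).ne_zero
    have hroot : ∀ w : ℂ, w ∈ R → (starRingEnd ℂ) w ∈ R := by
      intro w hw
      rw [hR, mem_roots hQ0, IsRoot.def, hQ, Polynomial.eval_map,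
        ← Polynomial.aeval_def] at hw ⊢
      rw [Polynomial.aeval_conj, hw, map_zero]
    have hzz : z ≠ (starRingEnd ℂ) z := by
      intro h
      exact hzim (Complex.conj_eq_iff_im.mp h.symm)
    set T : Finset ℂ := R.toFinset with hT
    set S : Finset ℂ := (T.erase z).erase ((starRingEnd ℂ) z) with hS
    have hmemS : ∀ w : ℂ, w ∈ S ↔ (w ≠ (starRingEnd ℂ) z ∧ w ≠ z ∧ w ∈ R) := by
      intro w
      simp [hS, hT, Finset.mem_erase, Multiset.mem_toFinset, and_assoc]
    have hzT : z ∈ T := Multiset.mem_toFinset.mpr hzR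
    have hczT : (starRingEnd ℂ) z ∈ T := Multiset.mem_toFinset.mpr (hroot z hzR)
    have hczTz : (starRingEnd ℂ) z ∈ T.erase z :=
      Finset.mem_erase.mpr ⟨fun h => hzz h.symm, hczT⟩
    have hcardT : S.card + 2 = T.card := by
      rw [hS, Finset.card_erase_of_mem hczTz, Finset.card_erase_of_mem hzT]
      have h2 : 1 < T.card := Finset.one_lt_card.mpr ⟨z, hzT, _, hczT, hzz⟩
      omega
    have hTn : T.card ≤ n := by
      calc T.card ≤ Multiset.card R := Multiset.toFinset_card_le R
        _ ≤ Q.natDegree := Polynomial.card_roots' Q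
        _ = n := by rw [hQ, (hP.natDegree_map _ : Q.natDegree = P.natDegree), hdeg]
    set A : ℂ[X] := ∏ w ∈ S, (X - C w) with hA
    have hSmem : ∀ w : ℂ, w ∈ S → (starRingEnd ℂ) w ∈ S := by
      intro w hw
      rw [hmemS] at hw ⊢
      obtain ⟨h1, h2, h3⟩ := hw
      refine ⟨fun h => h2 ?_, fun h => h1 ?_, hroot w h3⟩
      · simpa using congrArg (starRingEnd ℂ) h
      · simpa using congrArg (starRingEnd ℂ) h
    have hSconj : S.image (starRingEnd ℂ) = S := by
      ext w
      simp only [Finset.mem_image]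
      constructor
      · rintro ⟨v, hv, rfl⟩
        exact hSmem v hv
      · intro hw
        exact ⟨(starRingEnd ℂ) w, hSmem w hw, by simp⟩
    have hAconj : A.map (starRingEnd ℂ) = A := by
      rw [hA, Polynomial.map_prod]
      simp only [Polynomial.map_sub, Polynomial.map_X, Polynomial.map_C]
      conv_rhs => rw [← hSconj]
      rw [Finset.prod_image fun a _ b _ h => (starRingEnd ℂ).injective h]
    have hAz : A.eval z ≠ 0 := by
      rw [hA, Polynomial.eval_prod]
      refine Finset.prod_ne_zero_iff.mpr fun w hw => ?_
      have hne : w ≠ z := Finset.ne_of_mem_erase (Finset.mem_of_mem_erase hw)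
      simp only [eval_sub, eval_X, eval_C, sub_ne_zero]
      exact fun h => hne h.symm
    set c : ℂ := Complex.I / A.eval z with hc
    set a : ℝ := c.im / z.im with ha
    set b : ℝ := c.re - a * z.re with hb
    have hab : (a : ℂ) * z + (b : ℂ) = c := by
      apply Complex.ext
      · simp [hb]
      · have : a * z.im = c.im := by
          rw [ha, div_mul_cancel₀ _ hzim]
        simpa using this
    set p : ℂ[X] := (C (a:ℂ) * X + C (b:ℂ)) * A with hp
    have hpz : p.eval z = Complex.I := by
      rw [hp]
      simp only [eval_mul, eval_add, eval_C, eval_X]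
      rw [hab, hc, div_mul_cancel₀ _ hAz]
    have hpconj : p.map (starRingEnd ℂ) = p := by
      rw [hp, Polynomial.map_mul, hAconj]
      simp [Complex.conj_ofReal]
    have hevalconj : ∀ w : ℂ, p.eval ((starRingEnd ℂ) w) = (starRingEnd ℂ) (p.eval w) := by
      intro w
      conv_lhs => rw [← hpconj]
      rw [Polynomial.eval_map]
      rw [show p.eval w = Polynomial.eval₂ (RingHom.id ℂ) w p from rfl]
      rw [Polynomial.hom_eval₂]
      rw [RingHom.comp_id]
    have hcoeff : ∀ i : ℕ, ((p.coeff i).re : ℂ) = p.coeff i := by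
      intro i
      have := congrArg (fun q : ℂ[X] => q.coeff i) hpconj
      simp only [Polynomial.coeff_map] at this
      exact Complex.conj_eq_iff_re.mp this
    have hdegp : p.natDegree < n := by
      have hdA : A.natDegree = S.card := by
        rw [hA, Polynomial.natDegree_prod _ _ (fun w _ => X_sub_C_ne_zero w)]
        simp [Polynomial.natDegree_X_sub_C]
      have h1 : (C (a:ℂ) * X + C (b:ℂ)).natDegree ≤ 1 := Polynomial.natDegree_linear_le
      calc p.natDegree ≤ _ + _ := Polynomial.natDegree_mul_le
        _ ≤ 1 + S.card := add_le_add h1 (le_of_eq hdA)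
        _ < n := by omega
    set x : Fin n → ℝ := fun i => (p.coeff i).re with hx
    have heval : ∀ w : ℂ, (∑ i : Fin n, (x i : ℂ) * w ^ (i:ℕ)) = p.eval w := by
      intro w
      rw [Polynomial.eval_eq_sum_range' hdegp,
        ← Fin.sum_univ_eq_sum_range (fun i => p.coeff i * w ^ i) n]
      refine Finset.sum_congr rfl fun i _ => ?_
      rw [hx, hcoeff]
    have hform := hpsd.dotProduct_mulVec_nonneg x
    rw [form_eq, Multiset.map_congr rfl (fun w _ => by rw [heval w])] at hform
    have hsum : ((R.map fun w => p.eval w ^ 2).sum).re ≤ -1 := by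
      obtain ⟨R', hR'⟩ : ∃ R', R = z ::ₘ R' := ⟨R.erase z, (Multiset.cons_erase hzR).symm⟩
      rw [hR', Multiset.map_cons, Multiset.sum_cons, hpz]
      have hrest : (((R'.map fun w => p.eval w ^ 2)).sum).re ≤ 0 := by
        rw [re_msum]
        have hterm : ∀ w ∈ R', (p.eval w ^ 2).re ≤ (fun _ : ℂ => (0:ℝ)) w := by
          intro w hwR'
          have hwR : w ∈ R := by rw [hR']; exact Multiset.mem_cons_of_mem hwR'
          by_cases h1 : w = z
          · subst h1; rw [hpz]; norm_num [Complex.I_sq]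
          by_cases h2 : w = (starRingEnd ℂ) z
          · subst h2
            rw [hevalconj, hpz]
            simp [Complex.conj_I]
          · have hwS : w ∈ S := (hmemS w).mpr ⟨h2, h1, hwR⟩
            have hz0 : p.eval w = 0 := by
              rw [hp, eval_mul, hA, Polynomial.eval_prod,
                Finset.prod_eq_zero hwS (by simp)]
              ring
            rw [hz0]
            norm_num
        calc ((R'.map fun w => (p.eval w ^ 2).re)).sum
            ≤ ((R'.map fun _ => (0:ℝ))).sum :=
              Multiset.sum_map_le_sum_map _ _ hterm
          _ = 0 := by simp
      have hI : (Complex.I ^ 2 + ((R'.map fun w => p.eval w ^ 2)).sum).re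
          = -1 + (((R'.map fun w => p.eval w ^ 2)).sum).re := by
        simp [Complex.I_sq]
      rw [hI]
      linarith
    linarith
end

section
/- If a monic real polynomial P(x) = xⁿ + a₂x^{n−2} − a₃x^{n−3} + … + (−1)ⁿaₙ (with zero coefficient of x^{n−1}) has all roots real and a₂ = 0, then all its roots are equal to zero, i.e. P(x) = xⁿ. -/
open Polynomial

lemma esymm_one' (s : Multiset ℂ) : s.esymm 1 = s.sum := by
  simp [Multiset.esymm, Multiset.powersetCard_one, Multiset.map_map]

lemma esymm_cons_two (a : ℂ) (s : Multiset ℂ) :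
    (a ::ₘ s).esymm 2 = a * s.sum + s.esymm 2 := by
  rw [Multiset.esymm, show (2:ℕ) = 1 + 1 from rfl, Multiset.powersetCard_cons]
  simp [Multiset.esymm, Multiset.powersetCard_one, Multiset.map_map, Function.comp,
    add_comm]
  simpa using Multiset.sum_map_mul_left (s := s) (a := a) (f := id)

lemma sum_sq_eq (s : Multiset ℂ) :
    (s.map (fun z => z ^ 2)).sum = s.sum ^ 2 - 2 * s.esymm 2 := by
  induction s using Multiset.induction with
  | empty => simp [Multiset.esymm, Multiset.powersetCard_zero_right]
  | cons a s ih =>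
    rw [Multiset.map_cons, Multiset.sum_cons, ih, esymm_cons_two, Multiset.sum_cons]
    ring

/-- Lemma 3.6: a monic real polynomial of degree `n ≥ 2` with all roots real
and vanishing coefficients in degrees `n-1` and `n-2` equals `Xⁿ`, i.e. all its
roots are zero. -/
theorem eq_X_pow_of_coeffs_zero (n : ℕ) (hn : 2 ≤ n)
    (P : Polynomial ℝ) (hP : P.Monic) (hdeg : P.natDegree = n)
    (h1 : P.coeff (n - 1) = 0) (h2 : P.coeff (n - 2) = 0)
    (hreal : ∀ z ∈ (P.map (algebraMap ℝ ℂ)).roots, z.im = 0) :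
    P = X ^ n := by
  set Q := P.map (algebraMap ℝ ℂ) with hQdef
  have hQm : Q.Monic := hP.map _
  have hQdeg : Q.natDegree = n := by
    rw [hQdef, hP.natDegree_map, hdeg]
  have hcard : Multiset.card Q.roots = Q.natDegree :=
    (splits_iff_card_roots).1 (IsAlgClosed.splits Q)
  have hc1 : Q.coeff (n - 1) = 0 := by
    rw [hQdef, coeff_map, h1, map_zero]
  have hc2 : Q.coeff (n - 2) = 0 := by
    rw [hQdef, coeff_map, h2, map_zero]
  have hn1 : n - (n - 1) = 1 := by omega
  have hn2 : n - (n - 2) = 2 := by omega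
  have he1 : Q.roots.esymm 1 = 0 := by
    have := coeff_eq_esymm_roots_of_card hcard (k := n - 1) (by omega)
    rw [hc1, hQdeg, hn1, hQm.leadingCoeff] at this
    simpa using this.symm
  have he2 : Q.roots.esymm 2 = 0 := by
    have := coeff_eq_esymm_roots_of_card hcard (k := n - 2) (by omega)
    rw [hc2, hQdeg, hn2, hQm.leadingCoeff] at this
    simpa using this.symm
  have hsumz : Q.roots.sum = 0 := by rw [← esymm_one']; exact he1
  have hsq : (Q.roots.map (fun z => z ^ 2)).sum = 0 := by
    rw [sum_sq_eq, hsumz, he2]; ring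
  have hsqre : (Q.roots.map (fun z => z.re ^ 2)).sum = 0 := by
    have := congrArg Complex.re hsq
    rw [← Complex.coe_reAddGroupHom, map_multiset_sum, Multiset.map_map, map_zero] at this
    rw [← this]
    congr 1
    apply Multiset.map_congr rfl
    intro z hz
    have : z.im = 0 := hreal z hz
    simp [Complex.coe_reAddGroupHom, Complex.sq_norm, pow_two, Complex.mul_re, this]
  have hzero : ∀ z ∈ Q.roots, z = 0 := by
    intro z hz
    have hnn : ∀ x ∈ Q.roots.map (fun z => z.re ^ 2), (0:ℝ) ≤ x := by
      intro x hx
      obtain ⟨w, _, rfl⟩ := Multiset.mem_map.1 hx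
      positivity
    have hle : z.re ^ 2 ≤ (Q.roots.map (fun z => z.re ^ 2)).sum :=
      Multiset.single_le_sum hnn _ (Multiset.mem_map_of_mem _ hz)
    rw [hsqre] at hle
    have : z.re = 0 := by nlinarith [sq_nonneg z.re]
    exact Complex.ext this (hreal z hz)
  have hroots : Q.roots = Multiset.replicate n 0 := by
    rw [Multiset.eq_replicate]
    exact ⟨by rw [hcard, hQdeg], hzero⟩
  have hQ : Q = X ^ n := by
    have := C_leadingCoeff_mul_prod_multiset_X_sub_C hcard
    rw [hroots, hQm.leadingCoeff, map_one, one_mul] at this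
    simpa [Multiset.map_replicate, Multiset.prod_replicate] using this.symm
  have : P.map (algebraMap ℝ ℂ) = (X ^ n : Polynomial ℝ).map (algebraMap ℝ ℂ) := by
    rw [← hQdef, hQ, Polynomial.map_pow, map_X]
  exact Polynomial.map_injective _ (algebraMap ℝ ℂ).injective this
end

section
/- Multiplicity lemma: let t ↦ P(t), P(t)(x) = xⁿ + a₂(t)x^{n−2} − … + (−1)ⁿaₙ(t), be a smooth curve of monic real polynomials with all roots real, and let r be a positive integer. Then the following are equivalent: (1) a_k vanishes to order ≥ kr at t = 0 for all 2 ≤ k ≤ n; (2) a₂ vanishes to order ≥ 2r at t = 0. -/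
open Set Polynomial Multiset


lemma aux_within {f : ℝ → ℝ} (hf : ContDiff ℝ (⊤:ℕ∞) f) {s : Set ℝ} (hs : UniqueDiffOn ℝ s)
    {x : ℝ} (hx : x ∈ s) (m : ℕ) : iteratedDerivWithin m f s x = iteratedDeriv m f x := by
  have h : HasFTaylorSeriesUpToOn (⊤:ℕ∞) f (ftaylorSeriesWithin ℝ f univ) s :=
    ((hf.contDiffOn).ftaylorSeriesWithin uniqueDiffOn_univ).mono (subset_univ s)
  have h2 := h.eq_iteratedFDerivWithin_of_uniqueDiffOn (by exact_mod_cast le_top) hs hx (m := m)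
  rw [iteratedDerivWithin_eq_iteratedFDerivWithin, iteratedDeriv_eq_iteratedFDeriv, ← h2]
  simp [ftaylorSeriesWithin, iteratedFDerivWithin_univ]

lemma aux_lagrange {f : ℝ → ℝ} (hf : ContDiff ℝ (⊤:ℕ∞) f) (m : ℕ) (hm : 0 < m)
    (hz : ∀ j < m, iteratedDeriv j f 0 = 0) {t : ℝ} (ht : 0 < t) :
    ∃ ξ ∈ Set.Ioo 0 t, f t = iteratedDeriv m f ξ * t ^ m / m.factorial := by
  obtain ⟨m', rfl⟩ : ∃ m', m = m' + 1 := ⟨m - 1, by omega⟩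
  have hu : UniqueDiffOn ℝ (Set.Icc 0 t) := uniqueDiffOn_Icc ht
  have hdiff : DifferentiableOn ℝ (iteratedDerivWithin m' f (Set.Icc 0 t)) (Set.Ioo 0 t) := by
    apply DifferentiableOn.congr
      ((hf.differentiable_iteratedDeriv m' (by exact_mod_cast lt_top_iff_ne_top.mpr (by simp))).differentiableOn)
    exact fun x hx => aux_within hf hu (Set.mem_Icc_of_Ioo hx) m'
  obtain ⟨ξ, hξ, hEq⟩ := taylor_mean_remainder_lagrange (n := m') ht.ne
    (by rw [Set.uIcc_of_le ht.le]; exact ((hf.of_le (by exact_mod_cast le_top)).contDiffOn))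
    (by rw [Set.uIcc_of_le ht.le, Set.uIoo_of_le ht.le]; exact hdiff)
  rw [Set.uIoo_of_le ht.le] at hξ
  rw [Set.uIcc_of_le ht.le] at hEq
  refine ⟨ξ, hξ, ?_⟩
  have htay : taylorWithinEval f m' (Set.Icc 0 t) 0 t = 0 := by
    rw [taylor_within_apply]
    apply Finset.sum_eq_zero
    intro k hk
    rw [aux_within hf hu (Set.left_mem_Icc.mpr ht.le) k,
      hz k (by simpa using Finset.mem_range.mp hk)]
    simp
  rw [htay, sub_zero, sub_zero] at hEq
  rw [hEq, aux_within hf hu (Set.mem_Icc_of_Ioo hξ) (m' + 1)]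

lemma deriv_zero_of_bound {f : ℝ → ℝ} (hf : ContDiff ℝ (⊤:ℕ∞) f) (m : ℕ) {M δ : ℝ}
    (hδ : 0 < δ) (hM : 0 ≤ M) (hb : ∀ t : ℝ, |t| ≤ δ → |f t| ≤ M * |t| ^ m) :
    ∀ j, j < m → iteratedDeriv j f 0 = 0 := by
  intro j
  induction j using Nat.strong_induction_on with
  | _ j IH =>
  intro hjm
  have hf0 : f 0 = 0 := by
    have h0 := hb 0 (by simpa using hδ.le)
    rw [abs_zero, zero_pow (by omega : m ≠ 0), mul_zero] at h0
    exact abs_nonpos_iff.mp h0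
  rcases Nat.eq_zero_or_pos j with rfl | hj
  · simpa [iteratedDeriv_zero] using hf0
  by_contra hc
  set G := iteratedDeriv j f with hG
  have hcpos : 0 < |G 0| := abs_pos.mpr hc
  set c := |G 0|
  have hcont : Continuous G := hf.continuous_iteratedDeriv j (by exact_mod_cast le_top)
  have hca : ContinuousAt G 0 := hcont.continuousAt
  rw [Metric.continuousAt_iff] at hca
  obtain ⟨δ', hδ', hball⟩ := hca (c / 2) (by positivity)
  set t := min δ (min (δ' / 2) (min 1 (c / (2 * (j.factorial * M + 1))))) with htdef
  have htpos : 0 < t := by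
    apply lt_min hδ
    apply lt_min (by positivity)
    exact lt_min one_pos (by positivity)
  obtain ⟨ξ, hξ, hEq⟩ := aux_lagrange hf j hj (fun i hij => IH i hij (hij.trans hjm)) htpos
  -- |G ξ| ≤ j! * M * t ^ (m - j) ≤ j! * M * t
  have htle1 : t ≤ 1 := le_trans (min_le_right _ _) (le_trans (min_le_right _ _) (min_le_left _ _))
  have htδ : t ≤ δ := min_le_left _ _
  have hbt := hb t (by rwa [abs_of_pos htpos])
  have htpow : |f t| ≤ M * t ^ m := by rwa [abs_of_pos htpos] at hbt
  have hGξ : |G ξ| * t ^ j = |f t| * j.factorial := by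
    have : G ξ * t ^ j = f t * j.factorial := by
      rw [hEq, hG, div_mul_cancel₀ _ (by positivity)]
    calc |G ξ| * t ^ j = |G ξ * t ^ j| := by
          rw [abs_mul, abs_pow, abs_of_pos htpos]
      _ = |f t * j.factorial| := by rw [this]
      _ = |f t| * j.factorial := by rw [abs_mul, Nat.abs_cast]
  have hGb : |G ξ| ≤ j.factorial * M * t ^ (m - j) := by
    have h1 : |f t| * (j.factorial : ℝ) ≤ (j.factorial * M * t ^ (m - j)) * t ^ j := by
      calc |f t| * (j.factorial : ℝ) ≤ (M * t ^ m) * j.factorial := by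
            apply mul_le_mul_of_nonneg_right htpow (by positivity)
        _ = (j.factorial * M * t ^ (m - j)) * t ^ j := by
            rw [mul_assoc ((j.factorial : ℝ) * M), ← pow_add, Nat.sub_add_cancel hjm.le]
            ring
    rw [← hGξ] at h1
    exact le_of_mul_le_mul_right h1 (by positivity)
  have hfin : |G ξ| < c / 2 := by
    calc |G ξ| ≤ j.factorial * M * t ^ (m - j) := hGb
      _ ≤ j.factorial * M * t := by
          apply mul_le_mul_of_nonneg_left _ (by positivity)
          calc t ^ (m - j) ≤ t ^ 1 := pow_le_pow_of_le_one htpos.le htle1 (by omega)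
            _ = t := pow_one t
      _ ≤ j.factorial * M * (c / (2 * (j.factorial * M + 1))) := by
          apply mul_le_mul_of_nonneg_left _ (by positivity)
          exact le_trans (min_le_right _ _) (le_trans (min_le_right _ _) (min_le_right _ _))
      _ < c / 2 := by
          have hA : (0:ℝ) ≤ (j.factorial : ℝ) * M := by positivity
          have heq : (j.factorial : ℝ) * M * (c / (2 * ((j.factorial:ℝ) * M + 1)))
              = c * ((j.factorial:ℝ) * M) / (2 * ((j.factorial:ℝ) * M + 1)) := by ring
          rw [heq, div_lt_div_iff₀ (by positivity) (by norm_num)]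
          nlinarith [hcpos]
  have hξδ' : dist ξ 0 < δ' := by
    rw [Real.dist_eq, sub_zero, abs_of_pos hξ.1]
    calc ξ < t := hξ.2
      _ ≤ δ' / 2 := le_trans (min_le_right _ _) (min_le_left _ _)
      _ < δ' := by linarith
  have := hball hξδ'
  rw [Real.dist_eq] at this
  have : c ≤ |G ξ| + c / 2 := by
    calc c = |G 0| := rfl
      _ ≤ |G ξ| + |G ξ - G 0| := by
          have := abs_sub_abs_le_abs_sub (G 0) (G ξ)
          have h := abs_sub (G 0) (G ξ)
          nlinarith [abs_sub_abs_le_abs_sub (G 0) (G ξ), abs_sub_comm (G 0) (G ξ), abs_nonneg (G ξ - G 0)]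
      _ ≤ |G ξ| + c / 2 := by
          have h2 : |G ξ - G 0| ≤ c / 2 := le_of_lt this
          linarith
  linarith

lemma exists_cont_factor {f : ℝ → ℝ} (hf : ContDiff ℝ (⊤:ℕ∞) f) (m : ℕ) (hm : 0 < m)
    {M δ : ℝ} (hδ : 0 < δ) (hM : 0 ≤ M) (hb : ∀ t : ℝ, |t| ≤ δ → |f t| ≤ M * |t| ^ m) :
    ∃ g : ℝ → ℝ, Continuous g ∧ ∀ t, f t = t ^ m * g t := by
  have hz : ∀ j < m, iteratedDeriv j f 0 = 0 := fun j hj => deriv_zero_of_bound hf m hδ hM hb j hj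
  set G := iteratedDeriv m f with hGdef
  have hGc : Continuous G := hf.continuous_iteratedDeriv m (by exact_mod_cast le_top)
  have key : ∀ t : ℝ, t ≠ 0 → ∃ ξ : ℝ, |ξ| < |t| ∧ f t = G ξ * t ^ m / m.factorial := by
    intro t ht
    rcases lt_or_gt_of_ne ht with htneg | htpos
    · -- t < 0 : use f ∘ neg
      have hfn : ContDiff ℝ (⊤:ℕ∞) (fun x => f (-x)) := hf.comp contDiff_neg
      have hzn : ∀ j < m, iteratedDeriv j (fun x => f (-x)) 0 = 0 := by
        intro j hj
        rw [iteratedDeriv_comp_neg, neg_zero, hz j hj, smul_zero]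
      obtain ⟨ζ, hζ, hEq⟩ := aux_lagrange hfn m hm hzn (t := -t) (by linarith)
      refine ⟨-ζ, ?_, ?_⟩
      · rw [abs_of_neg htneg, abs_of_neg (by linarith [hζ.1] : -ζ < 0)]
        simpa using hζ.2
      · have h1 : iteratedDeriv m (fun x => f (-x)) ζ = (-1:ℝ) ^ m • iteratedDeriv m f (-ζ) :=
          iteratedDeriv_comp_neg m f ζ
        have hsq : ((-1:ℝ) ^ m) * ((-1:ℝ) ^ m) = 1 := by
          rw [← pow_add]
          exact Even.neg_one_pow ⟨m, rfl⟩
        calc f t = f (- -t) := by rw [neg_neg]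
          _ = iteratedDeriv m (fun x => f (-x)) ζ * (-t) ^ m / m.factorial := hEq
          _ = G (-ζ) * t ^ m / m.factorial := by
              rw [h1, smul_eq_mul, neg_pow]
              rw [div_eq_div_iff (by positivity) (by positivity)]
              linear_combination (iteratedDeriv m f (-ζ) * t ^ m * (m.factorial : ℝ)) * hsq
    · obtain ⟨ξ, hξ, hEq⟩ := aux_lagrange hf m hm hz htpos
      exact ⟨ξ, by rw [abs_of_pos hξ.1, abs_of_pos htpos]; exact hξ.2, hEq⟩
  set g : ℝ → ℝ := fun t => if t = 0 then G 0 / m.factorial else f t / t ^ m with hgdef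
  have hfac : (0:ℝ) < m.factorial := by exact_mod_cast m.factorial_pos
  refine ⟨g, ?_, ?_⟩
  · rw [continuous_iff_continuousAt]
    intro x
    rcases eq_or_ne x 0 with rfl | hx
    · rw [Metric.continuousAt_iff]
      intro ε hε
      have hGca : ContinuousAt G 0 := hGc.continuousAt
      rw [Metric.continuousAt_iff] at hGca
      obtain ⟨δ₁, hδ₁, hball⟩ := hGca (ε * m.factorial) (by positivity)
      refine ⟨δ₁, hδ₁, ?_⟩
      intro t htd
      rcases eq_or_ne t 0 with rfl | ht0
      · simpa using hε
      · obtain ⟨ξ, hξabs, hEq⟩ := key t ht0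
        have hg0 : g 0 = G 0 / m.factorial := by simp [hgdef]
        have hgt : g t = G ξ / m.factorial := by
          rw [hgdef]
          simp only [if_neg ht0]
          rw [hEq]
          field_simp
        rw [hgt, hg0, Real.dist_eq, div_sub_div_same, abs_div, abs_of_pos hfac,
          div_lt_iff₀ hfac]
        have hξd : dist ξ 0 < δ₁ := by
          rw [Real.dist_eq, sub_zero]
          calc |ξ| < |t| := hξabs
            _ = dist t 0 := by rw [Real.dist_eq, sub_zero]
            _ < δ₁ := htd
        have := hball hξd
        rwa [Real.dist_eq] at this
    · have hev : (fun y => f y / y ^ m) =ᶠ[nhds x] g := by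
        filter_upwards [isOpen_compl_singleton.mem_nhds hx] with y hy
        have hy' : y ≠ 0 := hy
        simp [hgdef, hy']
      have hca : ContinuousAt (fun y => f y / y ^ m) x :=
        (hf.continuous.continuousAt).div (continuousAt_pow x m) (pow_ne_zero m hx)
      exact hca.congr hev
  · intro t
    rcases eq_or_ne t 0 with rfl | ht0
    · have : f 0 = 0 := by simpa [iteratedDeriv_zero] using hz 0 hm
      simp [this, hgdef, zero_pow (by omega : m ≠ 0)]
    · rw [hgdef]
      simp only [if_neg ht0]
      rw [mul_div_cancel₀ _ (pow_ne_zero m ht0)]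


lemma ms_esymm_one (s : Multiset ℝ) : s.esymm 1 = s.sum := by
  simp [Multiset.esymm, powersetCard_one, Multiset.map_map, Function.comp]

lemma ms_esymm_two_cons (a : ℝ) (s : Multiset ℝ) :
    (a ::ₘ s).esymm 2 = a * s.sum + s.esymm 2 := by
  show (((a ::ₘ s).powersetCard 2).map Multiset.prod).sum = _
  rw [show (2:ℕ) = 1 + 1 from rfl, powersetCard_cons, Multiset.map_add, Multiset.sum_add,
    Multiset.map_map, powersetCard_one, Multiset.map_map]
  simp [Multiset.esymm, Function.comp, Multiset.sum_map_mul_left]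
  rw [Multiset.sum_map_mul_left]
  simp [Multiset.map_id']
  ring

lemma ms_sum_sq (s : Multiset ℝ) : (s.map (fun x => x ^ 2)).sum = s.sum ^ 2 - 2 * s.esymm 2 := by
  induction s using Multiset.induction_on with
  | empty => simp [Multiset.esymm, Multiset.powersetCard_eq_empty 2 (s := (0 : Multiset ℝ)) (by simp)]
  | cons a s ih =>
    rw [Multiset.map_cons, Multiset.sum_cons, ih, ms_esymm_two_cons, Multiset.sum_cons]
    ring

lemma ms_abs_prod (M : ℝ) (hM : 0 ≤ M) (s : Multiset ℝ) (h : ∀ x ∈ s, |x| ≤ M) :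
    |s.prod| ≤ M ^ (Multiset.card s) := by
  induction s using Multiset.induction_on with
  | empty => simp
  | cons a s ih =>
    rw [Multiset.prod_cons, Multiset.card_cons, abs_mul, pow_succ']
    exact mul_le_mul (h a (mem_cons_self a s)) (ih fun x hx => h x (mem_cons_of_mem hx))
      (abs_nonneg _) hM

lemma ms_esymm_abs (s : Multiset ℝ) (k : ℕ) (M : ℝ) (hM : 0 ≤ M) (h : ∀ x ∈ s, |x| ≤ M) :
    |s.esymm k| ≤ (Multiset.card s).choose k * M ^ k := by
  calc |s.esymm k| ≤ (((s.powersetCard k).map Multiset.prod).map abs).sum :=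
        Multiset.abs_sum_le_sum_abs
    _ ≤ (Multiset.card (((s.powersetCard k).map Multiset.prod).map abs)) • (M ^ k) := by
        apply Multiset.sum_le_card_nsmul
        intro x hx
        simp only [Multiset.mem_map] at hx
        obtain ⟨y, ⟨u, hu, rfl⟩, rfl⟩ := hx
        obtain ⟨hle, hcard⟩ := (Multiset.mem_powersetCard).mp hu
        calc |u.prod| ≤ M ^ (Multiset.card u) :=
              ms_abs_prod M hM u fun x hx => h x (Multiset.mem_of_le hle hx)
          _ = M ^ k := by rw [hcard]
    _ = (Multiset.card s).choose k * M ^ k := by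
        rw [Multiset.card_map, Multiset.card_map, Multiset.card_powersetCard, nsmul_eq_mul]

lemma ms_esymm_map (f : ℝ →+* ℂ) (s : Multiset ℝ) (k : ℕ) :
    (s.map f).esymm k = f (s.esymm k) := by
  rw [Multiset.esymm, Multiset.esymm, powersetCard_map, Multiset.map_map, map_multiset_sum,
    Multiset.map_map]
  congr 1
  apply Multiset.map_congr rfl
  intro u hu
  simp [map_multiset_prod]


lemma poly_facts (n : ℕ) (hn : 2 ≤ n) (b : ℕ → ℝ)
    (hreal : ∀ z ∈ ((X ^ n + ∑ k ∈ Finset.Icc 2 n,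
        C ((-1 : ℝ) ^ k * b k) * X ^ (n - k)).map (algebraMap ℝ ℂ)).roots, z.im = 0) :
    ∃ S : Multiset ℝ, Multiset.card S = n ∧ S.sum = 0 ∧
      ∀ k ∈ Finset.Icc 2 n, S.esymm k = b k := by
  set q : ℝ[X] := ∑ k ∈ Finset.Icc 2 n, C ((-1 : ℝ) ^ k * b k) * X ^ (n - k) with hqdef
  set P : ℝ[X] := X ^ n + q with hPdef
  have hq : q.degree < n := by
    apply lt_of_le_of_lt (degree_sum_le _ _)
    rw [Finset.sup_lt_iff (by exact_mod_cast WithBot.bot_lt_coe n)]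
    intro k hk
    apply lt_of_le_of_lt (degree_C_mul_X_pow_le _ _)
    have hk' : 2 ≤ k ∧ k ≤ n := by simpa using hk
    exact_mod_cast Nat.sub_lt (by omega) (by omega)
  have hmono : P.Monic := monic_X_pow_add hq
  have hdeg : P.degree = n := by
    rw [hPdef, degree_add_eq_left_of_degree_lt (by rwa [degree_X_pow]), degree_X_pow]
  have hnat : P.natDegree = n := natDegree_eq_of_degree_eq_some hdeg
  set Q : ℂ[X] := P.map (algebraMap ℝ ℂ) with hQdef
  have hmq : Q.Monic := hmono.map _
  have hnatQ : Q.natDegree = n := by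
    rw [hQdef, hmono.natDegree_map, hnat]
  have hcard : Multiset.card Q.roots = Q.natDegree :=
    splits_iff_card_roots.mp (IsAlgClosed.splits Q)
  -- coefficient computations of P
  have hc1 : P.coeff (n - 1) = 0 := by
    rw [hPdef, coeff_add, coeff_X_pow, if_neg (by omega : n - 1 ≠ n), hqdef,
      finset_sum_coeff]
    rw [Finset.sum_eq_zero]
    · ring
    intro k hk
    have hk' : 2 ≤ k ∧ k ≤ n := by simpa using hk
    rw [coeff_C_mul, coeff_X_pow, if_neg (by omega : ¬ (n - 1 = n - k)), mul_zero]
  have hck : ∀ k0 ∈ Finset.Icc 2 n, P.coeff (n - k0) = (-1) ^ k0 * b k0 := by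
    intro k0 hk0
    have hk0' : 2 ≤ k0 ∧ k0 ≤ n := by simpa using hk0
    rw [hPdef, coeff_add, coeff_X_pow, if_neg (by omega : ¬ (n - k0 = n)), hqdef,
      finset_sum_coeff]
    rw [Finset.sum_eq_single k0]
    · rw [coeff_C_mul, coeff_X_pow, if_pos rfl, mul_one, zero_add]
    · intro k hk hkk0
      have hk' : 2 ≤ k ∧ k ≤ n := by simpa using hk
      rw [coeff_C_mul, coeff_X_pow, if_neg (by omega : ¬ (n - k0 = n - k)), mul_zero]
    · intro h
      exact absurd hk0 h
  -- real multiset of roots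
  set S : Multiset ℝ := Q.roots.map Complex.re with hSdef
  have hSR : S.map (algebraMap ℝ ℂ) = Q.roots := by
    rw [hSdef, Multiset.map_map]
    conv_rhs => rw [← Multiset.map_id Q.roots]
    apply Multiset.map_congr rfl
    intro z hz
    apply Complex.ext
    · simp
    · simpa using (hreal z hz).symm
  have hesymm : ∀ k, ((S.esymm k : ℝ) : ℂ) = Q.roots.esymm k := by
    intro k
    rw [← hSR, ms_esymm_map (algebraMap ℝ ℂ) S k, Complex.coe_algebraMap]
  have hinj : Function.Injective (algebraMap ℝ ℂ) := (algebraMap ℝ ℂ).injective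
  have hcardS : Multiset.card S = n := by
    rw [hSdef, Multiset.card_map, hcard, hnatQ]
  -- Vieta
  have hvieta : ∀ k, k ≤ n → Q.coeff (n - k) = (-1) ^ k * Q.roots.esymm k := by
    intro k hk
    have h1 : n - k ≤ Q.natDegree := by omega
    have := Polynomial.coeff_eq_esymm_roots_of_card hcard h1
    rw [hmq.leadingCoeff, one_mul, hnatQ] at this
    rwa [(by omega : n - (n - k) = k)] at this
  refine ⟨S, hcardS, ?_, ?_⟩
  · have h1 := hvieta 1 (by omega)
    rw [hQdef, coeff_map, hc1, _root_.map_zero (algebraMap ℝ ℂ)] at h1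
    have h2 : Q.roots.esymm 1 = 0 := by
      simpa [neg_eq_zero] using h1.symm
    have h3 : ((S.esymm 1 : ℝ) : ℂ) = 0 := by rw [hesymm, h2]
    have h4 : S.esymm 1 = 0 := by exact_mod_cast h3
    rwa [ms_esymm_one] at h4
  · intro k hk
    have hk' : 2 ≤ k ∧ k ≤ n := by simpa using hk
    have h1 := hvieta k (by omega)
    rw [hQdef, coeff_map, hck k hk] at h1
    have h2 : ((b k : ℝ) : ℂ) = Q.roots.esymm k := by
      have hne : ((-1 : ℂ)) ^ k ≠ 0 := pow_ne_zero _ (by norm_num)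
      apply mul_left_cancel₀ hne
      rw [← h1, map_mul, map_pow, map_neg, map_one, Complex.coe_algebraMap]
    apply hinj
    show ((S.esymm k : ℝ) : ℂ) = ((b k : ℝ) : ℂ)
    rw [hesymm, ← h2]


/-- Multiplicity lemma 3.7: for a smooth curve
`P(t) = Xⁿ + a₂(t)X^{n-2} - a₃(t)X^{n-3} + … + (-1)ⁿ aₙ(t)` of real polynomials
with all roots real and a positive integer `r`, the coefficient `a_k` vanishes
to order `≥ k·r` at `t = 0` for all `2 ≤ k ≤ n` if and only if `a₂` vanishes to
order `≥ 2r` at `t = 0`. -/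
theorem multiplicity_lemma (n : ℕ) (hn : 2 ≤ n) (r : ℕ) (hr : 0 < r)
    (a : ℕ → ℝ → ℝ)
    (ha : ∀ k ∈ Finset.Icc 2 n, ContDiff ℝ (⊤ : ℕ∞) (a k))
    (hreal : ∀ t : ℝ, ∀ z ∈ ((X ^ n + ∑ k ∈ Finset.Icc 2 n,
        C ((-1 : ℝ) ^ k * a k t) * X ^ (n - k)).map (algebraMap ℝ ℂ)).roots, z.im = 0) :
    (∀ k ∈ Finset.Icc 2 n, ∃ g : ℝ → ℝ, Continuous g ∧ ∀ t, a k t = t ^ (k * r) * g t) ↔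
    (∃ g : ℝ → ℝ, Continuous g ∧ ∀ t, a 2 t = t ^ (2 * r) * g t) := by
  constructor
  · intro h
    exact h 2 (Finset.mem_Icc.mpr ⟨le_refl 2, hn⟩)
  · rintro ⟨g₂, hg₂c, hg₂⟩ k hk
    have hk' : 2 ≤ k ∧ k ≤ n := by simpa using hk
    have hroots : ∀ t : ℝ, ∃ S : Multiset ℝ, Multiset.card S = n ∧ S.sum = 0 ∧
        ∀ j ∈ Finset.Icc 2 n, S.esymm j = a j t :=
      fun t => poly_facts n hn (fun j => a j t) (hreal t)
    have habs : ∀ t : ℝ, 0 ≤ -(2 * a 2 t) ∧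
        |a k t| ≤ (n.choose k) * Real.sqrt (-(2 * a 2 t)) ^ k := by
      intro t
      obtain ⟨S, hcard, hsum, hesymm⟩ := hroots t
      have hsq : (S.map (fun x => x ^ 2)).sum = -(2 * a 2 t) := by
        rw [ms_sum_sq, hsum, hesymm 2 (Finset.mem_Icc.mpr ⟨le_refl 2, hn⟩)]
        ring
      have hnn : 0 ≤ -(2 * a 2 t) := by
        rw [← hsq]
        apply Multiset.sum_nonneg
        intro x hx
        obtain ⟨y, _, rfl⟩ := Multiset.mem_map.mp hx
        positivity
      have hroot : ∀ x ∈ S, |x| ≤ Real.sqrt (-(2 * a 2 t)) := by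
        intro x hx
        have hx2 : x ^ 2 ≤ -(2 * a 2 t) := by
          rw [← hsq]
          apply Multiset.single_le_sum
          · intro y hy
            obtain ⟨z, _, rfl⟩ := Multiset.mem_map.mp hy
            positivity
          · exact Multiset.mem_map_of_mem _ hx
        calc |x| = Real.sqrt (x ^ 2) := (Real.sqrt_sq_eq_abs x).symm
          _ ≤ _ := Real.sqrt_le_sqrt hx2
      refine ⟨hnn, ?_⟩
      rw [← hesymm k hk]
      have := ms_esymm_abs S k _ (Real.sqrt_nonneg _) hroot
      rwa [hcard] at this
    set h : ℝ → ℝ := fun t => (n.choose k) * Real.sqrt (2 * |g₂ t|) ^ k with hhdef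
    have hhc : Continuous h :=
      continuous_const.mul ((Real.continuous_sqrt.comp (continuous_const.mul hg₂c.abs)).pow k)
    obtain ⟨B, hB⟩ := (isCompact_Icc (a := (-1:ℝ)) (b := 1)).exists_bound_of_continuousOn
      hhc.continuousOn
    have hBnn : 0 ≤ B := le_trans (norm_nonneg _) (hB 0 (by norm_num))
    have hbound : ∀ t : ℝ, |t| ≤ 1 → |a k t| ≤ B * |t| ^ (k * r) := by
      intro t ht
      obtain ⟨hnn, hak⟩ := habs t
      have hsqrt : Real.sqrt (-(2 * a 2 t)) ≤ |t| ^ r * Real.sqrt (2 * |g₂ t|) := by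
        have h2 : -(2 * a 2 t) ≤ t ^ (2 * r) * (2 * |g₂ t|) := by
          have h1 : -(2 * a 2 t) = t ^ (2 * r) * (-(2 * g₂ t)) := by rw [hg₂ t]; ring
          rw [h1]
          apply mul_le_mul_of_nonneg_left _ (by rw [mul_comm 2 r, pow_mul]; positivity)
          have := neg_abs_le (g₂ t)
          linarith
        calc Real.sqrt (-(2 * a 2 t)) ≤ Real.sqrt (t ^ (2 * r) * (2 * |g₂ t|)) :=
              Real.sqrt_le_sqrt h2
          _ = Real.sqrt (t ^ (2 * r)) * Real.sqrt (2 * |g₂ t|) :=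
              Real.sqrt_mul (by rw [mul_comm 2 r, pow_mul]; positivity) _
          _ = |t| ^ r * Real.sqrt (2 * |g₂ t|) := by
              rw [mul_comm 2 r, pow_mul, Real.sqrt_sq_eq_abs, abs_pow]
      have htmem : t ∈ Set.Icc (-1:ℝ) 1 := by
        obtain ⟨h1, h2⟩ := abs_le.mp ht
        exact ⟨h1, h2⟩
      calc |a k t| ≤ n.choose k * Real.sqrt (-(2 * a 2 t)) ^ k := hak
        _ ≤ n.choose k * (|t| ^ r * Real.sqrt (2 * |g₂ t|)) ^ k := by
            apply mul_le_mul_of_nonneg_left _ (by positivity)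
            exact pow_le_pow_left₀ (Real.sqrt_nonneg _) hsqrt k
        _ = (n.choose k * Real.sqrt (2 * |g₂ t|) ^ k) * |t| ^ (k * r) := by
            rw [mul_pow, ← pow_mul, mul_comm r k]
            ring
        _ ≤ B * |t| ^ (k * r) := by
            apply mul_le_mul_of_nonneg_right _ (by positivity)
            calc n.choose k * Real.sqrt (2 * |g₂ t|) ^ k = h t := rfl
              _ ≤ |h t| := le_abs_self _
              _ ≤ B := by simpa [Real.norm_eq_abs] using hB t htmem
    exact exists_cont_factor (ha k hk) (k * r) (Nat.mul_pos (by omega) hr) one_pos hBnn hbound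
end
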